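/- arXiv:2205.13305 — 4 statements merged into one kernel-verified Lean document; each statement's English description precedes it below -/
import Mathlib

section
/- For every integer p ≥ 3, the determinant of the intersection matrix Q_I(p) equals (−1)^{p−1}. -/
open Matrix

/-- Entry of the tridiagonal pattern: 2 on the diagonal, -1 adjacent to it, 0 elsewhere. -/
def triEnt (i j : ℕ) : ℤ :=
  if i = j then 2 else if i + 1 = j ∨ j + 1 = i then -1 else 0

/-- The (1-indexed) entry of the intersection matrix `Q_I(p)`:
the principal submatrix on indices 1,…,p−1 is −J_{p−1}; the principal submatrix on
indices p,…,2p−3 is J_{p−2}; the entries (p−1, 2p−2) and (2p−2, p−1) are −1;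
the entries (p, 2p−2) and (2p−2, p) are 1; all other entries are 0. -/
def QIent (p i j : ℕ) : ℤ :=
  if i ≤ p - 1 ∧ j ≤ p - 1 then -(triEnt i j)
  else if p ≤ i ∧ i ≤ 2*p - 3 ∧ p ≤ j ∧ j ≤ 2*p - 3 then triEnt i j
  else if (i = p - 1 ∧ j = 2*p - 2) ∨ (i = 2*p - 2 ∧ j = p - 1) then -1
  else if (i = p ∧ j = 2*p - 2) ∨ (i = 2*p - 2 ∧ j = p) then 1
  else 0

/-- The intersection matrix `Q_I(p)`, of size (2p−2)×(2p−2). -/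
def QI (p : ℕ) : Matrix (Fin (2*p - 2)) (Fin (2*p - 2)) ℤ :=
  fun i j => QIent p (i.val + 1) (j.val + 1)

def Lent (p I K : ℕ) : ℚ :=
  if I = 2*p-2 then
    (if K = 2*p-2 then 1
     else if K = p-1 then ((p:ℚ)-1)/p
     else if p ≤ K ∧ K ≤ 2*p-3 then 1/((K:ℚ)-p+2) else 0)
  else if K = I then 1
  else if K + 1 = I ∧ I ≤ p - 1 then -((I:ℚ)-1)/I
  else if K + 1 = I ∧ p + 1 ≤ I then -((I:ℚ)-p)/((I:ℚ)-p+1)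
  else 0

def Uent (p I J : ℕ) : ℚ :=
  if I ≤ p - 1 then
    (if J = I then -((I:ℚ)+1)/I
     else if J = I+1 ∧ I ≤ p-2 then 1
     else if J = 2*p-2 ∧ I = p-1 then -1 else 0)
  else if I ≤ 2*p-3 then
    (if J = I then ((I:ℚ)-p+2)/((I:ℚ)-p+1)
     else if J = I+1 ∧ I ≤ 2*p-4 then -1
     else if J = 2*p-2 then 1/((I:ℚ)-p+1) else 0)
  else if I = 2*p-2 ∧ J = 2*p-2 then 1/((p:ℚ)*((p:ℚ)-1)) else 0

lemma Lent_eq_zero {p I K : ℕ} (h1 : I ≠ 2*p-2) (h2 : K ≠ I) (h3 : K+1 ≠ I) :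
    Lent p I K = 0 := by
  unfold Lent
  rw [if_neg h1, if_neg h2, if_neg (fun h => h3 h.1), if_neg (fun h => h3 h.1)]

lemma Lent_diag {p I : ℕ} : Lent p I I = 1 := by
  unfold Lent; split_ifs <;> first | rfl | (exfalso; omega)

lemma Uent_eq_zero {p I J : ℕ} (h1 : J ≠ I) (h2 : I ≤ p-1 → ¬(J = I+1 ∧ I ≤ p-2))
    (h2' : p ≤ I → ¬(J = I+1 ∧ I ≤ 2*p-4)) (h3 : ¬(J = 2*p-2 ∧ I = p-1))
    (h3' : ¬(p ≤ I ∧ I ≤ 2*p-3 ∧ J = 2*p-2)) (h4 : ¬(I = 2*p-2 ∧ J = 2*p-2)) :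
    Uent p I J = 0 := by
  unfold Uent
  split_ifs <;> first | rfl | (exfalso; omega)

-- U values, stated in leaf-ready cast form
lemma U_diagA {p m : ℕ} (h2 : m+1 ≤ p-1) :
    Uent p (m+1) (m+1) = -((m:ℚ)+2)/((m:ℚ)+1) := by
  unfold Uent; rw [if_pos h2, if_pos rfl]; push_cast; ring

lemma U_diagA_pm1 {p : ℕ} (hp : 3 ≤ p) :
    Uent p (p-1) (p-1) = -(p:ℚ)/((p:ℚ)-1) := by
  unfold Uent; rw [if_pos le_rfl, if_pos rfl, Nat.cast_sub (by omega : 1 ≤ p)]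
  push_cast; ring_nf

lemma U_supA {p m : ℕ} (h2 : m+1 ≤ p-2) : Uent p (m+1) (m+2) = 1 := by
  unfold Uent
  rw [if_pos (by omega), if_neg (by omega), if_pos ⟨by omega, h2⟩]

lemma U_colA {p : ℕ} (hp : 3 ≤ p) : Uent p (p-1) (2*p-2) = -1 := by
  unfold Uent
  rw [if_pos le_rfl, if_neg (by omega), if_neg (by omega), if_pos ⟨rfl, rfl⟩]

lemma U_diagB {p m : ℕ} (hp : 3 ≤ p) (h1 : p ≤ m+1) (h2 : m+1 ≤ 2*p-3) :
    Uent p (m+1) (m+1) = ((m:ℚ)+3-p)/((m:ℚ)+2-p) := by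
  unfold Uent; rw [if_neg (by omega), if_pos h2, if_pos rfl]; push_cast; ring_nf

lemma U_diagB_p {p : ℕ} (hp : 3 ≤ p) : Uent p p p = 2 := by
  unfold Uent
  rw [if_neg (by omega), if_pos (by omega), if_pos rfl]
  have : (p:ℚ) - p = 0 := sub_self _
  rw [sub_add_eq_add_sub, sub_add_eq_add_sub]
  rw [show (p:ℚ) + 2 - p = 2 by ring, show (p:ℚ) + 1 - p = 1 by ring]
  norm_num

lemma U_supB {p m : ℕ} (hp : 3 ≤ p) (h1 : p ≤ m+1) (h2 : m+1 ≤ 2*p-4) :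
    Uent p (m+1) (m+2) = -1 := by
  unfold Uent
  rw [if_neg (by omega), if_pos (by omega), if_neg (by omega), if_pos ⟨by omega, h2⟩]

lemma U_colB {p m : ℕ} (hp : 3 ≤ p) (h1 : p ≤ m+1) (h2 : m+1 ≤ 2*p-3) :
    Uent p (m+1) (2*p-2) = 1/((m:ℚ)+2-p) := by
  unfold Uent
  rw [if_neg (by omega), if_pos h2, if_neg (by omega), if_neg (by omega), if_pos rfl]
  push_cast; ring_nf

lemma U_colB_p {p : ℕ} (hp : 3 ≤ p) : Uent p p (2*p-2) = 1 := by
  unfold Uent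
  rw [if_neg (by omega), if_pos (by omega), if_neg (by omega), if_neg (by omega), if_pos rfl]
  rw [show (p:ℚ) - p + 1 = 1 by ring]
  norm_num

lemma U_corner {p : ℕ} (hp : 3 ≤ p) :
    Uent p (2*p-2) (2*p-2) = 1/((p:ℚ)*((p:ℚ)-1)) := by
  unfold Uent
  rw [if_neg (by omega), if_neg (by omega), if_pos ⟨rfl, rfl⟩]

-- L values
lemma L_last_zero {p K : ℕ} (h1 : K ≠ 2*p-2) (h2 : K ≠ p-1) (h3 : ¬(p ≤ K ∧ K ≤ 2*p-3)) :
    Lent p (2*p-2) K = 0 := by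
  unfold Lent; rw [if_pos rfl, if_neg h1, if_neg h2, if_neg h3]

lemma L_last_pm1 {p : ℕ} (hp : 3 ≤ p) : Lent p (2*p-2) (p-1) = ((p:ℚ)-1)/p := by
  unfold Lent; rw [if_pos rfl, if_neg (by omega), if_pos rfl]

lemma L_last_B {p m : ℕ} (hp : 3 ≤ p) (h1 : p ≤ m+1) (h2 : m+1 ≤ 2*p-3) :
    Lent p (2*p-2) (m+1) = 1/((m:ℚ)+3-p) := by
  unfold Lent
  rw [if_pos rfl, if_neg (by omega), if_neg (by omega), if_pos ⟨h1, h2⟩]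
  push_cast; ring_nf

lemma L_last_p {p : ℕ} (hp : 3 ≤ p) : Lent p (2*p-2) p = 1/2 := by
  unfold Lent
  rw [if_pos rfl, if_neg (by omega), if_neg (by omega), if_pos ⟨le_rfl, by omega⟩]
  rw [show (p:ℚ) - p + 2 = 2 by ring]

lemma L_last_corner {p : ℕ} : Lent p (2*p-2) (2*p-2) = 1 := by
  unfold Lent; rw [if_pos rfl, if_pos rfl]

lemma L_subA {p m : ℕ} (hp : 3 ≤ p) (h1 : m+2 ≤ p-1) :
    Lent p (m+2) (m+1) = -((m:ℚ)+1)/((m:ℚ)+2) := by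
  unfold Lent
  rw [if_neg (by omega), if_neg (by omega), if_pos ⟨rfl, h1⟩]
  push_cast; ring_nf

lemma L_sub_p {p : ℕ} (hp : 3 ≤ p) : Lent p p (p-1) = 0 := by
  unfold Lent
  rw [if_neg (by omega), if_neg (by omega), if_neg (by omega), if_neg (by omega)]

lemma L_subB {p m : ℕ} (hp : 3 ≤ p) (h1 : p + 1 ≤ m + 2) (h2 : m + 2 ≤ 2*p-3) :
    Lent p (m+2) (m+1) = -((m:ℚ)+2-p)/((m:ℚ)+3-p) := by
  unfold Lent
  rw [if_neg (by omega), if_neg (by omega), if_neg (by omega), if_pos ⟨rfl, h1⟩]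
  push_cast; ring_nf

lemma U_diagA2 {p m : ℕ} (h2 : m+2 ≤ p-1) :
    Uent p (m+2) (m+2) = -((m:ℚ)+3)/((m:ℚ)+2) := by
  unfold Uent; rw [if_pos h2, if_pos rfl]; push_cast; ring_nf

lemma U_diagB2 {p m : ℕ} (hp : 3 ≤ p) (h1 : p ≤ m+2) (h2 : m+2 ≤ 2*p-3) :
    Uent p (m+2) (m+2) = ((m:ℚ)+4-p)/((m:ℚ)+3-p) := by
  unfold Uent; rw [if_neg (by omega), if_pos h2, if_pos rfl]; push_cast; ring_nf

lemma U_colB2 {p m : ℕ} (hp : 3 ≤ p) (h1 : p ≤ m+2) (h2 : m+2 ≤ 2*p-3) :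
    Uent p (m+2) (2*p-2) = 1/((m:ℚ)+3-p) := by
  unfold Uent
  rw [if_neg (by omega), if_pos h2, if_neg (by omega), if_neg (by omega), if_pos rfl]
  push_cast; ring_nf

lemma U_supB_p {p : ℕ} (hp : 4 ≤ p) : Uent p p (p+1) = -1 := by
  unfold Uent
  rw [if_neg (by omega), if_pos (by omega), if_neg (by omega), if_pos ⟨rfl, by omega⟩]

lemma U_supA2 {p m : ℕ} (h2 : m+2 ≤ p-2) : Uent p (m+2) (m+3) = 1 := by
  unfold Uent
  rw [if_pos (by omega), if_neg (by omega), if_pos ⟨by omega, h2⟩]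

lemma U_supB2 {p m : ℕ} (hp : 3 ≤ p) (h1 : p ≤ m+2) (h2 : m+2 ≤ 2*p-4) :
    Uent p (m+2) (m+3) = -1 := by
  unfold Uent
  rw [if_neg (by omega), if_pos (by omega), if_neg (by omega), if_pos ⟨by omega, h2⟩]

lemma tele_sum (m : ℕ) : ∑ i ∈ Finset.range m, (1:ℚ)/(((i:ℚ)+1)*((i:ℚ)+2)) = m/(m+1) := by
  induction m with
  | zero => simp
  | succ n ih =>
      rw [Finset.sum_range_succ, ih]
      have h1 : ((n:ℚ)+1) ≠ 0 := by positivity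
      have h2 : ((n:ℚ)+2) ≠ 0 := by positivity
      push_cast
      field_simp
      ring

lemma QI_cast {p a b : ℕ} {v : ℤ} (h : QIent p a b = v) : (QIent p a b : ℚ) = (v : ℚ) := by
  rw [h]

set_option maxHeartbeats 2000000 in
lemma key (p : ℕ) (hp : 3 ≤ p) (i j : ℕ) (hi : i < 2*p-2) (hj : j < 2*p-2) :
    ∑ k ∈ Finset.range (2*p-2), Lent p (i+1) (k+1) * Uent p (k+1) (j+1)
      = (QIent p (i+1) (j+1) : ℚ) := by
  have hp0 : (p:ℚ) ≠ 0 := by positivity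
  have hp1 : (p:ℚ) - 1 ≠ 0 := by
    have : (3:ℚ) ≤ p := by exact_mod_cast hp
    intro h; nlinarith
  by_cases hlast : i + 1 = 2*p-2
  · -- last row
    obtain rfl : i = 2*p-3 := by omega
    rw [show 2*p-3+1 = 2*p-2 from by omega]
    by_cases he : j + 1 = 2*p-2
    · rw [he, QI_cast (v := 0) (by unfold QIent triEnt; split_ifs <;> omega)]
      rw [show Finset.range (2*p-2) = Finset.range ((p-1)+((p-2)+1)) from by congr 1; omega]
      rw [Finset.sum_range_add, Finset.sum_range_succ]
      have hA : ∑ k ∈ Finset.range (p-1), Lent p (2*p-2) (k+1) * Uent p (k+1) (2*p-2)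
          = -((p:ℚ)-1)/p := by
        rw [Finset.sum_eq_single_of_mem (p-2) (by simp only [Finset.mem_range]; omega)]
        · rw [show p-2+1 = p-1 from by omega, L_last_pm1 hp, U_colA hp]; ring
        · intro b hbm hbne
          simp only [Finset.mem_range] at hbm
          rw [L_last_zero (by omega) (by omega) (by omega), zero_mul]
      have hB : ∀ x ∈ Finset.range (p-2),
          Lent p (2*p-2) ((p-1)+x+1) * Uent p ((p-1)+x+1) (2*p-2)
            = 1/(((x:ℚ)+1)*((x:ℚ)+2)) := by
        intro x hx
        simp only [Finset.mem_range] at hx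
        rw [show (p-1)+x+1 = (p+x-1)+1 from by omega]
        rw [L_last_B hp (by omega) (by omega), U_colB hp (by omega) (by omega)]
        have h1 : ((x:ℚ)+1) ≠ 0 := by positivity
        have h2 : ((x:ℚ)+2) ≠ 0 := by positivity
        have hc : ((p+x-1:ℕ):ℚ) = (p:ℚ) + x - 1 := by
          rw [Nat.cast_sub (by omega)]; push_cast; ring
        rw [hc]
        rw [show (p:ℚ)+x-1+3-p = (x:ℚ)+2 by ring, show (p:ℚ)+x-1+2-p = (x:ℚ)+1 by ring]
        rw [div_mul_div_comm]; ring_nf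
      have hC : Lent p (2*p-2) ((p-1)+(p-2)+1) * Uent p ((p-1)+(p-2)+1) (2*p-2)
          = 1/((p:ℚ)*((p:ℚ)-1)) := by
        rw [show (p-1)+(p-2)+1 = 2*p-2 from by omega, L_last_corner, U_corner hp]; ring
      rw [hA, Finset.sum_congr rfl hB, tele_sum, hC]
      have hc2 : ((p-2:ℕ):ℚ) = (p:ℚ) - 2 := by
        rw [Nat.cast_sub (by omega)]; push_cast; ring
      rw [hc2]
      rw [show (p:ℚ)-2+1 = (p:ℚ)-1 by ring]
      field_simp
      ring
    by_cases hb : j + 1 = p - 1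
    · rw [hb, QI_cast (v := -1) (by unfold QIent triEnt; split_ifs <;> omega)]
      rw [Finset.sum_eq_single_of_mem (p-2) (by simp only [Finset.mem_range]; omega)]
      · rw [show p-2+1 = p-1 from by omega, L_last_pm1 hp, U_diagA_pm1 hp]
        push_cast
        field_simp
      · intro b _ hbne
        rcases le_or_gt (b+1) (p-2) with h | h
        · rw [L_last_zero (by omega) (by omega) (by omega), zero_mul]
        · rw [Uent_eq_zero (by omega) (by omega) (by omega) (by omega) (by omega) (by omega),
            mul_zero]
    by_cases hc : j + 1 = p
    · rw [hc, QI_cast (v := 1) (by unfold QIent triEnt; split_ifs <;> omega)]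
      rw [Finset.sum_eq_single_of_mem (p-1) (by simp only [Finset.mem_range]; omega)]
      · rw [show p-1+1 = p from by omega, L_last_p hp, U_diagB_p hp]
        norm_num
      · intro b _ hbne
        rw [Uent_eq_zero (by omega) (by omega) (by omega) (by omega) (by omega) (by omega),
          mul_zero]
    by_cases hd : p + 1 ≤ j + 1 ∧ j + 1 ≤ 2*p-3
    · obtain ⟨q, rfl⟩ : ∃ q, j = q + 1 := ⟨j - 1, by omega⟩
      rw [show q+1+1 = q+2 from by omega]
      rw [QI_cast (v := 0) (by unfold QIent triEnt; split_ifs <;> omega)]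
      have hred : ∑ k ∈ Finset.range (2*p-2), Lent p (2*p-2) (k+1) * Uent p (k+1) (q+2)
          = ∑ k ∈ ({q, q+1} : Finset ℕ), Lent p (2*p-2) (k+1) * Uent p (k+1) (q+2) := by
        refine (Finset.sum_subset ?_ ?_).symm
        · intro x hx
          simp only [Finset.mem_insert, Finset.mem_singleton] at hx
          simp only [Finset.mem_range]; omega
        · intro b _ hbn
          simp only [Finset.mem_insert, Finset.mem_singleton] at hbn
          push_neg at hbn
          rw [Uent_eq_zero (by omega) (by omega) (by omega) (by omega) (by omega) (by omega),
            mul_zero]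
      rw [hred, Finset.sum_pair (by omega : q ≠ q+1)]
      rw [show q+1+1 = q+2 from by omega]
      rw [L_last_B hp (by omega) (by omega),
        L_last_B (m := q+1) hp (by omega) (by omega),
        U_supB hp (by omega) (by omega),
        U_diagB (m := q+1) hp (by omega) (by omega)]
      have hq1 : (q:ℚ)+3-p ≠ 0 := by
        have : (p:ℚ) ≤ (q:ℚ)+1 := by exact_mod_cast (show p ≤ q+1 by omega)
        intro h; nlinarith
      have hq2 : (q:ℚ)+1+3-p ≠ 0 := by
        have : (p:ℚ) ≤ (q:ℚ)+1 := by exact_mod_cast (show p ≤ q+1 by omega)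
        intro h; nlinarith
      push_cast
      rw [show (q:ℚ)+1+2-p = (q:ℚ)+3-p by ring]
      field_simp
      ring
    · -- remaining: j + 1 ≤ p - 2
      rw [QI_cast (v := 0) (by unfold QIent triEnt; split_ifs <;> omega)]
      rw [Finset.sum_eq_zero]
      · norm_num
      · intro k _
        rcases le_or_gt (k+1) (p-2) with h | h
        · rw [L_last_zero (by omega) (by omega) (by omega), zero_mul]
        · rw [Uent_eq_zero (by omega) (by omega) (by omega) (by omega) (by omega) (by omega),
            mul_zero]
  · -- not last row
    rcases Nat.eq_zero_or_pos i with rfl | hpos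
    · -- first row
      rw [Finset.sum_eq_single_of_mem 0 (by simp only [Finset.mem_range]; omega)]
      · rw [show (0:ℕ)+1 = 1 from rfl, Lent_diag, one_mul]
        by_cases hj1 : j = 0
        · subst hj1
          rw [QI_cast (v := -2) (by unfold QIent triEnt; split_ifs <;> omega)]
          rw [show (0:ℕ)+1 = 0+1 from rfl, U_diagA (m := 0) (by omega)]
          norm_num
        by_cases hj2 : j = 1
        · subst hj2
          rw [QI_cast (v := 1) (by unfold QIent triEnt; split_ifs <;> omega)]
          rw [show (1:ℕ)+1 = 0+2 from rfl, U_supA (m := 0) (by omega)]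
          norm_num
        · rw [QI_cast (v := 0) (by unfold QIent triEnt; split_ifs <;> omega)]
          rw [Uent_eq_zero (by omega) (by omega) (by omega) (by omega) (by omega) (by omega)]
          norm_num
      · intro b _ hbne
        rw [Lent_eq_zero (by omega) (by omega) (by omega), zero_mul]
    · obtain ⟨m, rfl⟩ : ∃ m, i = m + 1 := ⟨i - 1, by omega⟩
      rw [show m+1+1 = m+2 from by omega] at hlast ⊢
      have hred : ∑ k ∈ Finset.range (2*p-2), Lent p (m+2) (k+1) * Uent p (k+1) (j+1)
          = Lent p (m+2) (m+1) * Uent p (m+1) (j+1) + 1 * Uent p (m+2) (j+1) := by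
        have hsub : ({m, m+1} : Finset ℕ) ⊆ Finset.range (2*p-2) := by
          intro x hx
          simp only [Finset.mem_insert, Finset.mem_singleton] at hx
          simp only [Finset.mem_range]; omega
        rw [← Finset.sum_subset hsub (fun b _ hbn => ?_)]
        · rw [Finset.sum_pair (by omega : m ≠ m+1)]
          rw [show m+1+1 = m+2 from by omega, Lent_diag]
        · simp only [Finset.mem_insert, Finset.mem_singleton] at hbn
          push_neg at hbn
          rw [Lent_eq_zero (by omega) (by omega) (by omega), zero_mul]
      rw [hred, one_mul]
      by_cases hA : m + 2 ≤ p - 1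
      · -- row in block A, 2 ≤ I ≤ p-1
        rw [L_subA hp hA]
        have h1 : ((m:ℚ)+1) ≠ 0 := by positivity
        have h2 : ((m:ℚ)+2) ≠ 0 := by positivity
        by_cases hj1 : j = m
        · rw [hj1]
          rw [QI_cast (a := m+2) (b := m+1) (v := 1) (by unfold QIent triEnt; split_ifs <;> omega)]
          rw [U_diagA (by omega),
            Uent_eq_zero (by omega) (by omega) (by omega) (by omega) (by omega) (by omega)]
          field_simp
          ring
        by_cases hj2 : j = m+1
        · rw [hj2, show m+1+1 = m+2 from by omega]
          rw [QI_cast (a := m+2) (b := m+2) (v := -2) (by unfold QIent triEnt; split_ifs <;> omega)]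
          rw [U_supA (by omega), U_diagA2 (by omega)]
          field_simp
          ring
        by_cases hj3 : j = m+2
        · rw [hj3, show m+2+1 = m+3 from by omega]
          rw [Uent_eq_zero (p := p) (I := m+1) (by omega) (by omega) (by omega) (by omega)
            (by omega) (by omega)]
          by_cases hs : m+2 ≤ p-2
          · rw [QI_cast (a := m+2) (b := m+3) (v := 1) (by unfold QIent triEnt; split_ifs <;> omega)]
            rw [U_supA2 hs]
            norm_num
          · -- m+2 = p-1, so j+1 = p
            rw [QI_cast (a := m+2) (b := m+3) (v := 0) (by unfold QIent triEnt; split_ifs <;> omega)]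
            rw [Uent_eq_zero (by omega) (by omega) (by omega) (by omega) (by omega) (by omega)]
            norm_num
        by_cases hj4 : j + 1 = 2*p-2
        · rw [hj4]
          rw [Uent_eq_zero (p := p) (I := m+1) (by omega) (by omega) (by omega) (by omega)
            (by omega) (by omega)]
          by_cases hs : m+2 = p-1
          · rw [QI_cast (a := m+2) (b := 2*p-2) (v := -1) (by unfold QIent triEnt; split_ifs <;> omega)]
            rw [hs, U_colA hp]
            norm_num
          · rw [QI_cast (a := m+2) (b := 2*p-2) (v := 0) (by unfold QIent triEnt; split_ifs <;> omega)]
            rw [Uent_eq_zero (by omega) (by omega) (by omega) (by omega) (by omega) (by omega)]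
            norm_num
        · rw [QI_cast (a := m+2) (b := j+1) (v := 0) (by unfold QIent triEnt; split_ifs <;> omega)]
          rw [Uent_eq_zero (by omega) (by omega) (by omega) (by omega) (by omega) (by omega),
            Uent_eq_zero (by omega) (by omega) (by omega) (by omega) (by omega) (by omega)]
          norm_num
      by_cases hB : m + 2 = p
      · -- row p
        rw [show m+1 = p-1 from by omega, show m+2 = p from hB, L_sub_p hp, zero_mul, zero_add]
        by_cases hj1 : j + 1 = p
        · rw [hj1, QI_cast (a := p) (b := p) (v := 2) (by unfold QIent triEnt; split_ifs <;> omega)]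
          rw [U_diagB_p hp]
          norm_num
        by_cases hj2 : j + 1 = 2*p-2
        · rw [hj2, QI_cast (a := p) (b := 2*p-2) (v := 1) (by unfold QIent triEnt; split_ifs <;> omega)]
          rw [U_colB_p hp]
          norm_num
        by_cases hj3 : j + 1 = p + 1
        · rw [hj3, QI_cast (a := p) (b := p+1) (v := -1) (by unfold QIent triEnt; split_ifs <;> omega)]
          rw [U_supB_p (by omega)]
          norm_num
        · rw [QI_cast (a := p) (b := j+1) (v := 0) (by unfold QIent triEnt; split_ifs <;> omega)]
          rw [Uent_eq_zero (by omega) (by omega) (by omega) (by omega) (by omega) (by omega)]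
          norm_num
      · -- row in block B, p+1 ≤ I ≤ 2p-3
        have hCC : p + 1 ≤ m + 2 ∧ m + 2 ≤ 2*p-3 := by omega
        rw [L_subB hp hCC.1 hCC.2]
        have hpm : (p:ℚ) ≤ (m:ℚ)+1 := by exact_mod_cast (show p ≤ m+1 by omega)
        have hx1 : (m:ℚ)+2-p ≠ 0 := fun h => by nlinarith
        have hx2 : (m:ℚ)+3-p ≠ 0 := fun h => by nlinarith
        have hx3 : (m:ℚ)+4-p ≠ 0 := fun h => by nlinarith
        by_cases hj4 : j + 1 = 2*p-2
        · rw [hj4, QI_cast (a := m+2) (b := 2*p-2) (v := 0) (by unfold QIent triEnt; split_ifs <;> omega)]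
          rw [U_colB hp (by omega) (by omega), U_colB2 hp (by omega) (by omega)]
          field_simp
          ring
        by_cases hj1 : j = m
        · rw [hj1]
          rw [QI_cast (a := m+2) (b := m+1) (v := -1) (by unfold QIent triEnt; split_ifs <;> omega)]
          rw [U_diagB hp (by omega) (by omega),
            Uent_eq_zero (by omega) (by omega) (by omega) (by omega) (by omega) (by omega)]
          field_simp
          norm_num
        by_cases hj2 : j = m+1
        · rw [hj2, show m+1+1 = m+2 from by omega]
          rw [QI_cast (a := m+2) (b := m+2) (v := 2) (by unfold QIent triEnt; split_ifs <;> omega)]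
          rw [U_supB hp (by omega) (by omega), U_diagB2 hp (by omega) (by omega)]
          field_simp
          ring
        by_cases hj3 : j = m+2
        · rw [hj3, show m+2+1 = m+3 from by omega]
          rw [QI_cast (a := m+2) (b := m+3) (v := -1) (by unfold QIent triEnt; split_ifs <;> omega)]
          rw [Uent_eq_zero (p := p) (I := m+1) (by omega) (by omega) (by omega) (by omega)
            (by omega) (by omega),
            U_supB2 hp (by omega) (by omega)]
          norm_num
        · rw [QI_cast (a := m+2) (b := j+1) (v := 0) (by unfold QIent triEnt; split_ifs <;> omega)]
          rw [Uent_eq_zero (by omega) (by omega) (by omega) (by omega) (by omega) (by omega),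
            Uent_eq_zero (by omega) (by omega) (by omega) (by omega) (by omega) (by omega)]
          norm_num

lemma tele_prodA (m : ℕ) :
    ∏ i ∈ Finset.range m, (-((i:ℚ)+2)/((i:ℚ)+1)) = (-1)^m * ((m:ℚ)+1) := by
  induction m with
  | zero => simp
  | succ n ih =>
      rw [Finset.prod_range_succ, ih]
      have h1 : ((n:ℚ)+1) ≠ 0 := by positivity
      push_cast
      field_simp
      ring

lemma tele_prodB (m : ℕ) :
    ∏ i ∈ Finset.range m, (((i:ℚ)+2)/((i:ℚ)+1)) = (m:ℚ)+1 := by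
  induction m with
  | zero => simp
  | succ n ih =>
      rw [Finset.prod_range_succ, ih]
      have h1 : ((n:ℚ)+1) ≠ 0 := by positivity
      push_cast
      field_simp
      ring

def Lmat (p : ℕ) : Matrix (Fin (2*p-2)) (Fin (2*p-2)) ℚ :=
  fun i j => Lent p (i.val+1) (j.val+1)

def Umat (p : ℕ) : Matrix (Fin (2*p-2)) (Fin (2*p-2)) ℚ :=
  fun i j => Uent p (i.val+1) (j.val+1)

lemma Lmat_tri (p : ℕ) : (Lmat p).BlockTriangular OrderDual.toDual := by
  intro i j hij
  have h1 : (i:ℕ) < (j:ℕ) := hij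
  have h2 : (j:ℕ) < 2*p-2 := j.isLt
  exact Lent_eq_zero (by omega) (by omega) (by omega)

lemma Umat_tri (p : ℕ) (hp : 3 ≤ p) : (Umat p).BlockTriangular id := by
  intro i j hij
  have h1 : (j:ℕ) < (i:ℕ) := hij
  have h2 : (i:ℕ) < 2*p-2 := i.isLt
  exact Uent_eq_zero (by omega) (by omega) (by omega) (by omega) (by omega) (by omega)

lemma det_L (p : ℕ) : (Lmat p).det = 1 := by
  rw [Matrix.det_of_lowerTriangular _ (Lmat_tri p)]
  exact Finset.prod_eq_one (fun i _ => Lent_diag)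

lemma det_U (p : ℕ) (hp : 3 ≤ p) : (Umat p).det = (-1)^(p-1) := by
  have hp0 : (p:ℚ) ≠ 0 := by positivity
  have hp1 : (p:ℚ) - 1 ≠ 0 := by
    have : (3:ℚ) ≤ p := by exact_mod_cast hp
    intro h; nlinarith
  have hc1 : ((p-1:ℕ):ℚ) = (p:ℚ) - 1 := by rw [Nat.cast_sub (by omega)]; push_cast; ring
  have hc2 : ((p-2:ℕ):ℚ) = (p:ℚ) - 2 := by rw [Nat.cast_sub (by omega)]; push_cast; ring
  rw [Matrix.det_of_upperTriangular (Umat_tri p hp)]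
  have hconv : (∏ i : Fin (2*p-2), Umat p i i)
      = ∏ k ∈ Finset.range (2*p-2), Uent p (k+1) (k+1) :=
    Fin.prod_univ_eq_prod_range (fun k => Uent p (k+1) (k+1)) (2*p-2)
  rw [hconv]
  rw [show Finset.range (2*p-2) = Finset.range ((p-1)+((p-2)+1)) from by congr 1; omega]
  rw [Finset.prod_range_add, Finset.prod_range_succ]
  have hA : ∏ x ∈ Finset.range (p-1), Uent p (x+1) (x+1) = (-1)^(p-1) * (p:ℚ) := by
    have h1 : ∀ x ∈ Finset.range (p-1), Uent p (x+1) (x+1) = -((x:ℚ)+2)/((x:ℚ)+1) := by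
      intro x hx
      simp only [Finset.mem_range] at hx
      exact U_diagA (by omega)
    rw [Finset.prod_congr rfl h1, tele_prodA, hc1]
    ring
  have hB : ∏ x ∈ Finset.range (p-2), Uent p ((p-1)+x+1) ((p-1)+x+1) = (p:ℚ)-1 := by
    have h1 : ∀ x ∈ Finset.range (p-2),
        Uent p ((p-1)+x+1) ((p-1)+x+1) = ((x:ℚ)+2)/((x:ℚ)+1) := by
      intro x hx
      simp only [Finset.mem_range] at hx
      rw [show (p-1)+x+1 = (p+x-1)+1 from by omega, U_diagB hp (by omega) (by omega)]
      have hc : ((p+x-1:ℕ):ℚ) = (p:ℚ)+x-1 := by rw [Nat.cast_sub (by omega)]; push_cast; ring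
      rw [hc, show (p:ℚ)+x-1+3-p = (x:ℚ)+2 by ring, show (p:ℚ)+x-1+2-p = (x:ℚ)+1 by ring]
    rw [Finset.prod_congr rfl h1, tele_prodB, hc2]
    ring
  rw [hA, hB, show (p-1)+(p-2)+1 = 2*p-2 from by omega, U_corner hp]
  field_simp

lemma QIfactorLU (p : ℕ) (hp : 3 ≤ p) :
    (QI p).map ((Int.cast : ℤ → ℚ)) = Lmat p * Umat p := by
  ext i j
  rw [Matrix.map_apply, Matrix.mul_apply]
  have hsum : (∑ k : Fin (2*p-2), Lmat p i k * Umat p k j)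
      = ∑ k ∈ Finset.range (2*p-2), Lent p (i.val+1) (k+1) * Uent p (k+1) (j.val+1) :=
    Fin.sum_univ_eq_sum_range (fun k => Lent p (i.val+1) (k+1) * Uent p (k+1) (j.val+1)) (2*p-2)
  rw [hsum, key p hp i.val j.val i.isLt j.isLt]
  rfl

theorem det_QI (p : ℕ) (hp : 3 ≤ p) : (QI p).det = (-1) ^ (p - 1) := by
  have h : ((QI p).det : ℚ) = (((-1:ℤ) ^ (p-1) : ℤ) : ℚ) := by
    have h1 : ((QI p).det : ℚ) = ((QI p).map ((Int.cast : ℤ → ℚ))).det := by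
      have := RingHom.map_det (Int.castRingHom ℚ) (QI p)
      simpa using this
    rw [h1, QIfactorLU p hp, Matrix.det_mul, det_L, det_U p hp, one_mul]
    push_cast
    ring
  exact_mod_cast h
end

section
/- For every integer p ≥ 3, the matrix Q_I(p), regarded as a real symmetric matrix, has exactly p−1 positive eigenvalues and exactly p−1 negative eigenvalues, counted with multiplicity; in particular its signature is 0. -/
open Matrix Finset

lemma quad_decomp {N : ℕ} {M : Matrix (Fin N) (Fin N) ℝ} (hM : M.IsHermitian) (x : Fin N → ℝ) :
    x ⬝ᵥ M *ᵥ x = ∑ i, hM.eigenvalues i *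
      ((star (hM.eigenvectorUnitary : Matrix (Fin N) (Fin N) ℝ) *ᵥ x) i)^2 := by
  set U := (hM.eigenvectorUnitary : Matrix (Fin N) (Fin N) ℝ) with hU
  have h1 : x ᵥ* U = star U *ᵥ x := by
    funext i
    simp [Matrix.vecMul, Matrix.mulVec, dotProduct, Matrix.star_apply, mul_comm]
  conv_lhs => rw [hM.spectral_theorem, Unitary.conjStarAlgAut_apply, ← hU]
  rw [← Matrix.mulVec_mulVec, ← Matrix.mulVec_mulVec, Matrix.dotProduct_mulVec, h1]
  simp only [RCLike.ofReal_real_eq_id, Function.comp_def, id_eq]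
  rw [dotProduct, Finset.sum_congr rfl]
  intro i _
  simp [Matrix.mulVec_diagonal]
  ring

lemma card_le_subspace {N a : ℕ} {M : Matrix (Fin N) (Fin N) ℝ} (hM : M.IsHermitian)
    (P : ℝ → Prop) [DecidablePred P]
    (v : Fin a → (Fin N → ℝ))
    (hcontra : ∀ c : Fin a → ℝ, c ≠ 0 →
      (∀ i : Fin N, P (hM.eigenvalues i) →
        (star (hM.eigenvectorUnitary : Matrix (Fin N) (Fin N) ℝ) *ᵥ (∑ i, c i • v i)) i = 0) →
      False) :
    a ≤ (Finset.univ.filter (fun i => P (hM.eigenvalues i))).card := by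
  classical
  set U := (hM.eigenvectorUnitary : Matrix (Fin N) (Fin N) ℝ) with hU
  let B : Matrix (Fin N) (Fin a) ℝ := Matrix.of (fun j i => v i j)
  have hB : ∀ c : Fin a → ℝ, B *ᵥ c = ∑ i, c i • v i := by
    intro c
    funext j
    simp [B, Matrix.mulVec, dotProduct, Finset.sum_apply, mul_comm]
  let T : (Fin a → ℝ) →ₗ[ℝ] ({i : Fin N // P (hM.eigenvalues i)} → ℝ) :=
    (LinearMap.funLeft ℝ ℝ (fun i => (i : Fin N))) ∘ₗ (star U).mulVecLin ∘ₗ B.mulVecLin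
  have hinj : Function.Injective T := by
    rw [← LinearMap.ker_eq_bot, LinearMap.ker_eq_bot']
    intro c hc
    by_contra hc0
    apply hcontra c hc0
    intro i hi
    rw [← hB]
    have := congrFun hc ⟨i, hi⟩
    simpa only [T, LinearMap.comp_apply, Matrix.mulVecLin_apply, LinearMap.funLeft_apply,
      Pi.zero_apply] using this
  have := LinearMap.finrank_le_finrank_of_injective hinj
  simpa [Module.finrank_pi, Fintype.card_subtype] using this

lemma inertia_count {N a b : ℕ} {M : Matrix (Fin N) (Fin N) ℝ} (hM : M.IsHermitian)
    (v : Fin a → (Fin N → ℝ)) (w : Fin b → (Fin N → ℝ))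
    (hv : ∀ c : Fin a → ℝ, c ≠ 0 → 0 < (∑ i, c i • v i) ⬝ᵥ M *ᵥ (∑ i, c i • v i))
    (hw : ∀ c : Fin b → ℝ, c ≠ 0 → (∑ i, c i • w i) ⬝ᵥ M *ᵥ (∑ i, c i • w i) < 0)
    (hab : a + b = N) :
    (Finset.univ.filter (fun i => 0 < hM.eigenvalues i)).card = a ∧
    (Finset.univ.filter (fun i => hM.eigenvalues i < 0)).card = b := by
  classical
  have hposle : a ≤ (Finset.univ.filter (fun i => 0 < hM.eigenvalues i)).card := by
    apply card_le_subspace hM (fun t => 0 < t) v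
    intro c hc hzero
    have h1 := hv c hc
    rw [quad_decomp hM] at h1
    have h2 : (∑ i, hM.eigenvalues i * ((star (hM.eigenvectorUnitary : Matrix (Fin N) (Fin N) ℝ) *ᵥ
        (∑ i, c i • v i)) i)^2) ≤ 0 := by
      apply Finset.sum_nonpos
      intro i _
      by_cases hpos : 0 < hM.eigenvalues i
      · rw [hzero i hpos]; simp
      · push_neg at hpos
        exact mul_nonpos_of_nonpos_of_nonneg hpos (sq_nonneg _)
    linarith
  have hnegle : b ≤ (Finset.univ.filter (fun i => hM.eigenvalues i < 0)).card := by
    apply card_le_subspace hM (fun t => t < 0) w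
    intro c hc hzero
    have h1 := hw c hc
    rw [quad_decomp hM] at h1
    have h2 : (0:ℝ) ≤ (∑ i, hM.eigenvalues i * ((star (hM.eigenvectorUnitary : Matrix (Fin N) (Fin N) ℝ) *ᵥ
        (∑ i, c i • w i)) i)^2) := by
      apply Finset.sum_nonneg
      intro i _
      by_cases hneg : hM.eigenvalues i < 0
      · rw [hzero i hneg]; simp
      · push_neg at hneg
        exact mul_nonneg hneg (sq_nonneg _)
    linarith
  have hdis : Disjoint (Finset.univ.filter (fun i => 0 < hM.eigenvalues i))
      (Finset.univ.filter (fun i => hM.eigenvalues i < 0)) := by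
    rw [Finset.disjoint_filter]
    intro i _ h1 h2
    linarith
  have hsum : (Finset.univ.filter (fun i => 0 < hM.eigenvalues i)).card +
      (Finset.univ.filter (fun i => hM.eigenvalues i < 0)).card ≤ N := by
    rw [← Finset.card_union_of_disjoint hdis]
    calc _ ≤ (Finset.univ : Finset (Fin N)).card := Finset.card_le_card (Finset.subset_univ _)
    _ = N := by simp
  omega

lemma triEnt_self (a : ℕ) : triEnt a a = 2 := by simp [triEnt]

lemma triEnt_succ_left (a : ℕ) : triEnt (a+1) a = -1 := by
  unfold triEnt; split_ifs with h1 h2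
  · omega
  · rfl
  · omega

lemma triEnt_zero {a b : ℕ} (h : a + 1 < b ∨ b + 1 < a) : triEnt a b = 0 := by
  unfold triEnt; split_ifs with h1 h2
  · omega
  · omega
  · rfl

lemma triQuad (m : ℕ) (hm : 1 ≤ m) (x : ℕ → ℝ) :
    ∑ j ∈ Finset.range m, ∑ k ∈ Finset.range m, (triEnt (j+1) (k+1) : ℝ) * x j * x k
    = x 0 ^ 2 + (∑ k ∈ Finset.range (m-1), (x (k+1) - x k)^2) + x (m-1)^2 := by
  induction m, hm using Nat.le_induction with
  | base =>
    simp only [Finset.sum_range_one, triEnt_self, Finset.sum_range_zero]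
    push_cast; ring
  | succ m hm ih =>
    obtain ⟨mm, rfl⟩ : ∃ mm, m = mm + 1 := ⟨m-1, by omega⟩
    simp only [Nat.add_sub_cancel] at ih ⊢
    rw [Finset.sum_range_succ]
    have hcol : ∑ k ∈ Finset.range (mm+1+1), (triEnt (mm+1+1) (k+1) : ℝ) * x (mm+1) * x k
        = -(x (mm+1) * x mm) + 2 * x (mm+1) * x (mm+1) := by
      rw [Finset.sum_range_succ, triEnt_self]
      have hmain : ∑ k ∈ Finset.range (mm+1), (triEnt (mm+1+1) (k+1) : ℝ) * x (mm+1) * x k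
          = -(x (mm+1) * x mm) := by
        rw [Finset.sum_eq_single mm]
        · rw [show triEnt (mm+1+1) (mm+1) = -1 from triEnt_succ_left (mm+1)]
          push_cast; ring
        · intro k hk hne
          rw [Finset.mem_range] at hk
          rw [triEnt_zero (by omega)]; norm_num
        · intro h
          exact absurd (Finset.mem_range.mpr (by omega)) h
      rw [hmain]; push_cast; ring
    have hinner : ∀ j ∈ Finset.range (mm+1),
        ∑ k ∈ Finset.range (mm+1+1), (triEnt (j+1) (k+1) : ℝ) * x j * x k
        = (∑ k ∈ Finset.range (mm+1), (triEnt (j+1) (k+1) : ℝ) * x j * x k)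
          + (if j = mm then -(x mm * x (mm+1)) else 0) := by
      intro j hj
      rw [Finset.sum_range_succ]
      congr 1
      rw [Finset.mem_range] at hj
      by_cases hje : j = mm
      · rw [hje]
        have hv : triEnt (mm+1) (mm+1+1) = -1 := by
          unfold triEnt; split_ifs with h1 h2
          · omega
          · rfl
          · omega
        rw [hv, if_pos rfl]
        push_cast; ring
      · rw [triEnt_zero (by omega), if_neg hje]; norm_num
    rw [Finset.sum_congr rfl hinner, Finset.sum_add_distrib, ih, hcol,
      Finset.sum_ite_eq' (Finset.range (mm+1)) mm (fun _ => -(x mm * x (mm+1))),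
      if_pos (Finset.mem_range.mpr (by omega))]
    rw [Finset.sum_range_succ]
    ring

lemma triEnt_shift (a b c : ℕ) : triEnt (a + c) (b + c) = triEnt a b := by
  unfold triEnt
  split_ifs <;> first | rfl | omega | (exfalso; omega)

set_option maxHeartbeats 3200000 in
lemma qdecR (s j k : ℕ) (x : ℕ → ℝ) :
    (QIent (s+3) (j+1) (k+1) : ℝ) * x j * x k =
      (if j < s+2 ∧ k < s+2 then -((triEnt (j+1) (k+1) : ℝ) * x j * x k) else 0)
    + (if s+2 ≤ j ∧ j ≤ 2*s+2 ∧ s+2 ≤ k ∧ k ≤ 2*s+2 then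
        (triEnt (j-(s+1)) (k-(s+1)) : ℝ) * x j * x k else 0)
    + (if (j = s+1 ∧ k = 2*s+3) ∨ (j = 2*s+3 ∧ k = s+1) then -(x j * x k) else 0)
    + (if (j = s+2 ∧ k = 2*s+3) ∨ (j = 2*s+3 ∧ k = s+2) then x j * x k else 0) := by
  unfold QIent
  split_ifs <;>
    first
      | (exfalso; omega)
      | (push_cast; ring1)
      | (rw [show j + 1 = j - (s+1) + (s+2) from by omega,
             show k + 1 = k - (s+1) + (s+2) from by omega, triEnt_shift]
         push_cast; ring1)

lemma pair_sum {N a b : ℕ} (hab : a ≠ b) (ha : a < N) (hb : b < N) (F : ℕ → ℕ → ℝ) :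
    ∑ j ∈ Finset.range N, ∑ k ∈ Finset.range N,
      (if (j = a ∧ k = b) ∨ (j = b ∧ k = a) then F j k else 0)
    = F a b + F b a := by
  have hinner : ∀ j ∈ Finset.range N,
      (∑ k ∈ Finset.range N, (if (j = a ∧ k = b) ∨ (j = b ∧ k = a) then F j k else 0))
      = (if j = a then F a b else 0) + (if j = b then F b a else 0) := by
    intro j _
    by_cases hja : j = a
    · have h1 : ∀ k ∈ Finset.range N, (if (j = a ∧ k = b) ∨ (j = b ∧ k = a) then F j k else 0)
          = (if k = b then F j k else 0) := fun k _ => if_congr (by omega) rfl rfl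
      rw [Finset.sum_congr rfl h1, Finset.sum_ite_eq' (Finset.range N) b (fun k => F j k),
        if_pos (Finset.mem_range.mpr hb), if_pos hja, if_neg (show ¬ j = b by omega), add_zero, hja]
    · by_cases hjb : j = b
      · have h1 : ∀ k ∈ Finset.range N, (if (j = a ∧ k = b) ∨ (j = b ∧ k = a) then F j k else 0)
            = (if k = a then F j k else 0) := fun k _ => if_congr (by omega) rfl rfl
        rw [Finset.sum_congr rfl h1, Finset.sum_ite_eq' (Finset.range N) a (fun k => F j k),
          if_pos (Finset.mem_range.mpr ha), if_pos hjb, if_neg hja, zero_add, hjb]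
      · rw [if_neg hja, if_neg hjb, add_zero]
        apply Finset.sum_eq_zero
        intro k _
        rw [if_neg]
        omega
  rw [Finset.sum_congr rfl hinner, Finset.sum_add_distrib,
    Finset.sum_ite_eq' (Finset.range N) a (fun _ => F a b),
    Finset.sum_ite_eq' (Finset.range N) b (fun _ => F b a),
    if_pos (Finset.mem_range.mpr ha), if_pos (Finset.mem_range.mpr hb)]

lemma block_sum {N m : ℕ} (hm : m ≤ N) (G : ℕ → ℕ → ℝ) :
    ∑ j ∈ Finset.range N, ∑ k ∈ Finset.range N,
      (if j < m ∧ k < m then G j k else 0)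
    = ∑ j ∈ Finset.range m, ∑ k ∈ Finset.range m, G j k := by
  rw [← Finset.sum_subset (Finset.range_subset_range.mpr hm)]
  · apply Finset.sum_congr rfl
    intro j hj
    rw [Finset.mem_range] at hj
    rw [← Finset.sum_subset (Finset.range_subset_range.mpr hm)]
    · apply Finset.sum_congr rfl
      intro k hk
      rw [Finset.mem_range] at hk
      rw [if_pos ⟨hj, hk⟩]
    · intro k _ hk
      rw [Finset.mem_range] at hk
      rw [if_neg (by omega)]
  · intro j _ hj
    rw [Finset.mem_range] at hj
    apply Finset.sum_eq_zero
    intro k _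
    rw [if_neg (by omega)]

lemma mid_sum {s N : ℕ} (h : 2*s+3 ≤ N) (G : ℕ → ℕ → ℝ) :
    ∑ j ∈ Finset.range N, ∑ k ∈ Finset.range N,
      (if s+2 ≤ j ∧ j ≤ 2*s+2 ∧ s+2 ≤ k ∧ k ≤ 2*s+2 then G j k else 0)
    = ∑ j ∈ Finset.range (s+1), ∑ k ∈ Finset.range (s+1), G (s+2+j) (s+2+k) := by
  have hsub : Finset.Ico (s+2) (2*s+3) ⊆ Finset.range N := by
    intro x hx
    rw [Finset.mem_Ico] at hx
    rw [Finset.mem_range]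
    omega
  have inner : ∀ j : ℕ, s+2 ≤ j → j ≤ 2*s+2 →
      (∑ k ∈ Finset.range N, (if s+2 ≤ j ∧ j ≤ 2*s+2 ∧ s+2 ≤ k ∧ k ≤ 2*s+2 then G j k else 0))
      = ∑ k ∈ Finset.range (s+1), G j (s+2+k) := by
    intro j hj1 hj2
    rw [← Finset.sum_subset hsub (by
      intro k _ hk
      rw [Finset.mem_Ico] at hk
      rw [if_neg (by omega)])]
    rw [Finset.sum_Ico_eq_sum_range, show 2*s+3 - (s+2) = s+1 from by omega]
    apply Finset.sum_congr rfl
    intro k hk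
    rw [Finset.mem_range] at hk
    rw [if_pos (by omega)]
  rw [← Finset.sum_subset hsub (by
    intro j _ hj
    rw [Finset.mem_Ico] at hj
    apply Finset.sum_eq_zero
    intro k _
    rw [if_neg (by omega)])]
  rw [Finset.sum_Ico_eq_sum_range, show 2*s+3 - (s+2) = s+1 from by omega]
  apply Finset.sum_congr rfl
  intro j hj
  rw [Finset.mem_range] at hj
  exact inner (s+2+j) (by omega) (by omega)

lemma master (s : ℕ) (x : ℕ → ℝ) :
    ∑ j ∈ Finset.range (2*s+4), ∑ k ∈ Finset.range (2*s+4),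
      (QIent (s+3) (j+1) (k+1) : ℝ) * x j * x k
    = -(x 0^2 + (∑ k ∈ Finset.range (s+1), (x (k+1) - x k)^2) + x (s+1)^2)
      + (x (s+2)^2 + (∑ k ∈ Finset.range s, (x (s+2+(k+1)) - x (s+2+k))^2) + x (s+2+s)^2)
      + 2 * x (2*s+3) * (x (s+2) - x (s+1)) := by
  have step1 : ∀ j ∈ Finset.range (2*s+4), ∀ k ∈ Finset.range (2*s+4), True := fun _ _ _ _ => trivial
  calc ∑ j ∈ Finset.range (2*s+4), ∑ k ∈ Finset.range (2*s+4),
      (QIent (s+3) (j+1) (k+1) : ℝ) * x j * x k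
      = (∑ j ∈ Finset.range (2*s+4), ∑ k ∈ Finset.range (2*s+4),
          (if j < s+2 ∧ k < s+2 then -((triEnt (j+1) (k+1) : ℝ) * x j * x k) else 0))
      + (∑ j ∈ Finset.range (2*s+4), ∑ k ∈ Finset.range (2*s+4),
          (if s+2 ≤ j ∧ j ≤ 2*s+2 ∧ s+2 ≤ k ∧ k ≤ 2*s+2 then
            (triEnt (j-(s+1)) (k-(s+1)) : ℝ) * x j * x k else 0))
      + (∑ j ∈ Finset.range (2*s+4), ∑ k ∈ Finset.range (2*s+4),
          (if (j = s+1 ∧ k = 2*s+3) ∨ (j = 2*s+3 ∧ k = s+1) then -(x j * x k) else 0))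
      + (∑ j ∈ Finset.range (2*s+4), ∑ k ∈ Finset.range (2*s+4),
          (if (j = s+2 ∧ k = 2*s+3) ∨ (j = 2*s+3 ∧ k = s+2) then x j * x k else 0)) := by
        rw [← Finset.sum_add_distrib, ← Finset.sum_add_distrib, ← Finset.sum_add_distrib]
        apply Finset.sum_congr rfl
        intro j _
        rw [← Finset.sum_add_distrib, ← Finset.sum_add_distrib, ← Finset.sum_add_distrib]
        apply Finset.sum_congr rfl
        intro k _
        exact qdecR s j k x
    _ = -(x 0^2 + (∑ k ∈ Finset.range (s+1), (x (k+1) - x k)^2) + x (s+1)^2)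
      + (x (s+2)^2 + (∑ k ∈ Finset.range s, (x (s+2+(k+1)) - x (s+2+k))^2) + x (s+2+s)^2)
      + 2 * x (2*s+3) * (x (s+2) - x (s+1)) := by
        rw [block_sum (by omega) _, mid_sum (by omega) _,
          pair_sum (show s+1 ≠ 2*s+3 from by omega) (by omega) (by omega),
          pair_sum (show s+2 ≠ 2*s+3 from by omega) (by omega) (by omega)]
        simp only [Finset.sum_neg_distrib]
        rw [triQuad (s+2) (by omega) x]
        have hmid : ∑ j ∈ Finset.range (s+1), ∑ k ∈ Finset.range (s+1),
            (triEnt (s+2+j-(s+1)) (s+2+k-(s+1)) : ℝ) * x (s+2+j) * x (s+2+k)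
            = ∑ j ∈ Finset.range (s+1), ∑ k ∈ Finset.range (s+1),
              (triEnt (j+1) (k+1) : ℝ) * x (s+2+j) * x (s+2+k) := by
          apply Finset.sum_congr rfl
          intro j _
          apply Finset.sum_congr rfl
          intro k _
          rw [show s+2+j-(s+1) = j+1 from by omega, show s+2+k-(s+1) = k+1 from by omega]
        rw [hmid]
        have TB := triQuad (s+1) (by omega) (fun i => x (s+2+i))
        norm_num at TB
        rw [TB]
        norm_num
        ring

noncomputable def Xv (s : ℕ) (c : ℕ → ℝ) : ℕ → ℝ := fun j =>
  if j ≤ s+1 then -((j:ℝ)+1) * c (s+1)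
  else if j ≤ 2*s+2 then c (j-(s+2))
  else if j = 2*s+3 then ((s:ℝ)+3) * c (s+1)
  else 0

lemma Xv_low {s j : ℕ} (h : j ≤ s+1) (c : ℕ → ℝ) : Xv s c j = -((j:ℝ)+1) * c (s+1) := by
  simp [Xv, h]

lemma Xv_mid {s i : ℕ} (h : i ≤ s) (c : ℕ → ℝ) : Xv s c (s+2+i) = c i := by
  unfold Xv
  rw [if_neg (by omega), if_pos (by omega)]
  congr 1
  omega

lemma Xv_s2 (s : ℕ) (c : ℕ → ℝ) : Xv s c (s+2) = c 0 := by
  have := Xv_mid (show 0 ≤ s from Nat.zero_le s) c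
  simpa using this

lemma Xv_top (s : ℕ) (c : ℕ → ℝ) : Xv s c (2*s+3) = ((s:ℝ)+3) * c (s+1) := by
  unfold Xv
  rw [if_neg (by omega), if_neg (by omega), if_pos rfl]

lemma posSOS (s : ℕ) (c : ℕ → ℝ) :
    ((s:ℝ)+2)^2 * (∑ j ∈ Finset.range (2*s+4), ∑ k ∈ Finset.range (2*s+4),
      (QIent (s+3) (j+1) (k+1) : ℝ) * Xv s c j * Xv s c k)
    = (((s:ℝ)+2)*c 0 + ((s:ℝ)+3)*((s:ℝ)+1)*c (s+1))^2
      + (∑ k ∈ Finset.range s, (((s:ℝ)+2)*(c (k+1) - c k) - ((s:ℝ)+3)*c (s+1))^2)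
      + (((s:ℝ)+2)*c s + ((s:ℝ)+3)*c (s+1))^2
      + ((s:ℝ)+3)*((s:ℝ)+2)*(c (s+1))^2 := by
  rw [master]
  have hA : ∑ k ∈ Finset.range (s+1), (Xv s c (k+1) - Xv s c k)^2
      = ((s:ℝ)+1) * (c (s+1))^2 := by
    have h1 : ∀ k ∈ Finset.range (s+1), (Xv s c (k+1) - Xv s c k)^2 = (c (s+1))^2 := by
      intro k hk
      rw [Finset.mem_range] at hk
      rw [Xv_low (by omega), Xv_low (by omega)]
      push_cast; ring
    rw [Finset.sum_congr rfl h1, Finset.sum_const, Finset.card_range, nsmul_eq_mul]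
    push_cast; ring
  have hB : ∑ k ∈ Finset.range s, (Xv s c (s+2+(k+1)) - Xv s c (s+2+k))^2
      = ∑ k ∈ Finset.range s, (c (k+1) - c k)^2 := by
    apply Finset.sum_congr rfl
    intro k hk
    rw [Finset.mem_range] at hk
    rw [Xv_mid (by omega), Xv_mid (by omega)]
  have hR : ∑ k ∈ Finset.range s, (((s:ℝ)+2)*(c (k+1) - c k) - ((s:ℝ)+3)*c (s+1))^2
      = ((s:ℝ)+2)^2 * (∑ k ∈ Finset.range s, (c (k+1) - c k)^2)
        - 2*((s:ℝ)+2)*(((s:ℝ)+3)*c (s+1))*(c s - c 0)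
        + (s:ℝ)*(((s:ℝ)+3)*c (s+1))^2 := by
    have expand : ∀ k ∈ Finset.range s,
        (((s:ℝ)+2)*(c (k+1) - c k) - ((s:ℝ)+3)*c (s+1))^2
        = ((s:ℝ)+2)^2*(c (k+1)-c k)^2
          - (2*((s:ℝ)+2)*(((s:ℝ)+3)*c (s+1)))*(c (k+1) - c k)
          + (((s:ℝ)+3)*c (s+1))^2 := fun k _ => by ring
    rw [Finset.sum_congr rfl expand, Finset.sum_add_distrib, Finset.sum_sub_distrib,
      ← Finset.mul_sum, ← Finset.mul_sum, Finset.sum_range_sub c s,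
      Finset.sum_const, Finset.card_range, nsmul_eq_mul]
  rw [hA, hB, hR, Xv_low (show 0 ≤ s+1 from by omega), Xv_low (le_refl (s+1)),
    Xv_s2, Xv_mid (le_refl s), Xv_top]
  push_cast
  ring

lemma posQuad_pos (s : ℕ) (c : ℕ → ℝ) (hc : ∃ i, i ≤ s+1 ∧ c i ≠ 0) :
    0 < ∑ j ∈ Finset.range (2*s+4), ∑ k ∈ Finset.range (2*s+4),
      (QIent (s+3) (j+1) (k+1) : ℝ) * Xv s c j * Xv s c k := by
  by_contra hq
  push_neg at hq
  have E := posSOS s c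
  set Q := ∑ j ∈ Finset.range (2*s+4), ∑ k ∈ Finset.range (2*s+4),
      (QIent (s+3) (j+1) (k+1) : ℝ) * Xv s c j * Xv s c k with hQdef
  have hQ0 : ((s:ℝ)+2)^2 * Q ≤ 0 := mul_nonpos_of_nonneg_of_nonpos (by positivity) hq
  rw [E] at hQ0
  have hS : (0:ℝ) ≤ ∑ k ∈ Finset.range s, (((s:ℝ)+2)*(c (k+1) - c k) - ((s:ℝ)+3)*c (s+1))^2 :=
    Finset.sum_nonneg (fun k _ => sq_nonneg _)
  have hU1 := sq_nonneg (((s:ℝ)+2)*c 0 + ((s:ℝ)+3)*((s:ℝ)+1)*c (s+1))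
  have hU2 := sq_nonneg (((s:ℝ)+2)*c s + ((s:ℝ)+3)*c (s+1))
  have hE4 : (0:ℝ) ≤ ((s:ℝ)+3)*((s:ℝ)+2)*(c (s+1))^2 := by positivity
  have h4 : ((s:ℝ)+3)*((s:ℝ)+2)*(c (s+1))^2 ≤ 0 := by linarith
  have hspos : (0:ℝ) < ((s:ℝ)+3)*((s:ℝ)+2) := by positivity
  have h5 : (c (s+1))^2 ≤ 0 := by nlinarith [sq_nonneg (c (s+1))]
  have ht : c (s+1) = 0 :=
    pow_eq_zero_iff two_ne_zero |>.mp (le_antisymm h5 (sq_nonneg _))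
  have hU1z : (((s:ℝ)+2)*c 0 + ((s:ℝ)+3)*((s:ℝ)+1)*c (s+1))^2 ≤ 0 := by linarith
  have hu1eq : ((s:ℝ)+2)*c 0 + ((s:ℝ)+3)*((s:ℝ)+1)*c (s+1) = 0 :=
    pow_eq_zero_iff two_ne_zero |>.mp (le_antisymm hU1z (sq_nonneg _))
  have hu0 : c 0 = 0 := by
    rw [ht, mul_zero, add_zero] at hu1eq
    rcases mul_eq_zero.mp hu1eq with h3 | h3
    · exfalso
      have : ((s:ℝ)+2) ≠ 0 := by positivity
      exact this h3
    · exact h3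
  have hSz : ∑ k ∈ Finset.range s, (((s:ℝ)+2)*(c (k+1) - c k) - ((s:ℝ)+3)*c (s+1))^2 = 0 := by
    linarith
  have hterms := (Finset.sum_eq_zero_iff_of_nonneg (fun k _ => sq_nonneg _)).mp hSz
  have hstep : ∀ k, k < s → c (k+1) = c k := by
    intro k hk
    have h2 := pow_eq_zero_iff two_ne_zero |>.mp (hterms k (Finset.mem_range.mpr hk))
    rw [ht, mul_zero, sub_zero] at h2
    rcases mul_eq_zero.mp h2 with h3 | h3
    · exfalso
      have : ((s:ℝ)+2) ≠ 0 := by positivity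
      exact this h3
    · linarith [sub_eq_zero.mp h3]
  have hall : ∀ i, i ≤ s → c i = 0 := by
    intro i
    induction i with
    | zero => intro _; exact hu0
    | succ n ih =>
      intro h
      rw [hstep n (by omega), ih (by omega)]
  obtain ⟨i, hi, hci⟩ := hc
  rcases Nat.lt_or_ge i (s+1) with h | h
  · exact hci (hall i (by omega))
  · have : i = s+1 := by omega
    rw [this] at hci
    exact hci ht

noncomputable def Xw (s : ℕ) (c : ℕ → ℝ) : ℕ → ℝ := fun j => if j ≤ s+1 then c j else 0

lemma negSOS (s : ℕ) (c : ℕ → ℝ) :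
    ∑ j ∈ Finset.range (2*s+4), ∑ k ∈ Finset.range (2*s+4),
      (QIent (s+3) (j+1) (k+1) : ℝ) * Xw s c j * Xw s c k
    = -((c 0)^2 + (∑ k ∈ Finset.range (s+1), (c (k+1) - c k)^2) + (c (s+1))^2) := by
  rw [master]
  have e1 : ∀ j, j ≤ s+1 → Xw s c j = c j := fun j h => by simp [Xw, h]
  have e2 : ∀ j, s+1 < j → Xw s c j = 0 := fun j h => by
    simp only [Xw, if_neg (by omega : ¬ j ≤ s+1)]
  have hA : ∑ k ∈ Finset.range (s+1), (Xw s c (k+1) - Xw s c k)^2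
      = ∑ k ∈ Finset.range (s+1), (c (k+1) - c k)^2 := by
    apply Finset.sum_congr rfl
    intro k hk
    rw [Finset.mem_range] at hk
    rw [e1 _ (by omega), e1 _ (by omega)]
  have hB : ∑ k ∈ Finset.range s, (Xw s c (s+2+(k+1)) - Xw s c (s+2+k))^2 = 0 := by
    apply Finset.sum_eq_zero
    intro k _
    rw [e2 _ (by omega), e2 _ (by omega)]
    ring
  rw [hA, hB, e1 0 (by omega), e1 (s+1) (le_refl _), e2 (s+2) (by omega),
    e2 (s+2+s) (by omega), e2 (2*s+3) (by omega)]
  ring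

lemma negQuad_neg (s : ℕ) (c : ℕ → ℝ) (hc : ∃ i, i ≤ s+1 ∧ c i ≠ 0) :
    ∑ j ∈ Finset.range (2*s+4), ∑ k ∈ Finset.range (2*s+4),
      (QIent (s+3) (j+1) (k+1) : ℝ) * Xw s c j * Xw s c k < 0 := by
  rw [negSOS]
  have h0 : (0:ℝ) ≤ ∑ k ∈ Finset.range (s+1), (c (k+1) - c k)^2 :=
    Finset.sum_nonneg (fun k _ => sq_nonneg _)
  have hne : (c 0)^2 + (∑ k ∈ Finset.range (s+1), (c (k+1) - c k)^2) + (c (s+1))^2 ≠ 0 := by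
    intro heq
    have hc0 : (c 0)^2 = 0 := by nlinarith [sq_nonneg (c 0), sq_nonneg (c (s+1))]
    have hSz : ∑ k ∈ Finset.range (s+1), (c (k+1) - c k)^2 = 0 := by
      nlinarith [sq_nonneg (c 0), sq_nonneg (c (s+1))]
    have hterms := (Finset.sum_eq_zero_iff_of_nonneg (fun k _ => sq_nonneg _)).mp hSz
    have hstep : ∀ k, k < s+1 → c (k+1) = c k := by
      intro k hk
      have h2 := pow_eq_zero_iff two_ne_zero |>.mp (hterms k (Finset.mem_range.mpr hk))
      linarith [sub_eq_zero.mp h2]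
    have hall : ∀ i, i ≤ s+1 → c i = 0 := by
      intro i
      induction i with
      | zero => intro _; exact pow_eq_zero_iff two_ne_zero |>.mp hc0
      | succ n ih => intro h; rw [hstep n (by omega), ih (by omega)]
    obtain ⟨i, hi, hci⟩ := hc
    exact hci (hall i hi)
  have hnn : (0:ℝ) ≤ (c 0)^2 + (∑ k ∈ Finset.range (s+1), (c (k+1) - c k)^2) + (c (s+1))^2 := by
    have := sq_nonneg (c 0); have := sq_nonneg (c (s+1)); linarith
  have : (0:ℝ) < (c 0)^2 + (∑ k ∈ Finset.range (s+1), (c (k+1) - c k)^2) + (c (s+1))^2 :=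
    lt_of_le_of_ne hnn (Ne.symm hne)
  linarith

-- delta sum helper
lemma delta_sum {n : ℕ} (c : Fin n → ℝ) (m : ℕ) (a : ℝ) (hm : m < n) :
    ∑ i : Fin n, c i • (a * (if m = (i:ℕ) then (1:ℝ) else 0)) = a * c ⟨m, hm⟩ := by
  rw [Finset.sum_eq_single ⟨m, hm⟩]
  · simp [mul_comm]
  · intro i _ hne
    have hne' : m ≠ (i : ℕ) := by
      intro h
      apply hne
      apply Fin.ext
      simpa using h.symm
    simp [hne']
  · intro h
    exact absurd (Finset.mem_univ _) h

lemma Xv_zero {s j : ℕ} (h : 2*s+3 < j) (c : ℕ → ℝ) : Xv s c j = 0 := by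
  unfold Xv
  rw [if_neg (by omega), if_neg (by omega), if_neg (by omega)]

lemma delta_sum' {n : ℕ} (c : Fin n → ℝ) (m : ℕ) (hm : m < n) :
    ∑ i : Fin n, c i • (if m = (i:ℕ) then (1:ℝ) else 0) = c ⟨m, hm⟩ := by
  have := delta_sum c m 1 hm
  simp only [one_mul] at this ⊢
  exact this

lemma Xv_sum (s : ℕ) (c : Fin (s+2) → ℝ) (j : ℕ) :
    ∑ i : Fin (s+2), c i • Xv s (fun k => if k = (i:ℕ) then (1:ℝ) else 0) j
    = Xv s (fun k => if h : k < s+2 then c ⟨k,h⟩ else 0) j := by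
  by_cases h1 : j ≤ s+1
  · rw [Xv_low h1, dif_pos (show s+1 < s+2 from by omega)]
    rw [Finset.sum_congr rfl (fun i _ => by rw [Xv_low h1])]
    exact delta_sum c (s+1) (-((j:ℝ)+1)) (by omega)
  · by_cases h2 : j ≤ 2*s+2
    · rw [show j = s+2+(j-(s+2)) from by omega]
      rw [Xv_mid (show j-(s+2) ≤ s from by omega), dif_pos (show j-(s+2) < s+2 from by omega)]
      rw [Finset.sum_congr rfl (fun i _ => by rw [Xv_mid (show j-(s+2) ≤ s from by omega)])]
      exact delta_sum' c (j-(s+2)) (by omega)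
    · by_cases h3 : j = 2*s+3
      · rw [h3, Xv_top, dif_pos (show s+1 < s+2 from by omega)]
        rw [Finset.sum_congr rfl (fun i _ => by rw [Xv_top])]
        exact delta_sum c (s+1) (((s:ℝ)+3)) (by omega)
      · rw [Xv_zero (by omega)]
        rw [Finset.sum_congr rfl (fun i _ => by rw [Xv_zero (show 2*s+3 < j from by omega)])]
        simp

lemma Xw_low {s j : ℕ} (h : j ≤ s+1) (c : ℕ → ℝ) : Xw s c j = c j := by simp [Xw, h]

lemma Xw_zero {s j : ℕ} (h : s+1 < j) (c : ℕ → ℝ) : Xw s c j = 0 := by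
  simp only [Xw, if_neg (by omega : ¬ j ≤ s+1)]

lemma Xw_sum (s : ℕ) (c : Fin (s+2) → ℝ) (j : ℕ) :
    ∑ i : Fin (s+2), c i • Xw s (fun k => if k = (i:ℕ) then (1:ℝ) else 0) j
    = Xw s (fun k => if h : k < s+2 then c ⟨k,h⟩ else 0) j := by
  by_cases h1 : j ≤ s+1
  · rw [Xw_low h1, dif_pos (show j < s+2 from by omega)]
    rw [Finset.sum_congr rfl (fun i _ => by rw [Xw_low h1])]
    exact delta_sum' c j (by omega)
  · rw [Xw_zero (by omega)]
    rw [Finset.sum_congr rfl (fun i _ => by rw [Xw_zero (show s+1 < j from by omega)])]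
    simp

lemma quad_to_range (p : ℕ) (x : Fin (2*p-2) → ℝ) :
    x ⬝ᵥ ((QI p).map (Int.cast : ℤ → ℝ)) *ᵥ x
    = ∑ j ∈ Finset.range (2*p-2), ∑ k ∈ Finset.range (2*p-2),
        (QIent p (j+1) (k+1) : ℝ) *
          (if h : j < 2*p-2 then x ⟨j,h⟩ else 0) *
          (if h : k < 2*p-2 then x ⟨k,h⟩ else 0) := by
  rw [← Fin.sum_univ_eq_sum_range (fun j => ∑ k ∈ Finset.range (2*p-2),
      (QIent p (j+1) (k+1) : ℝ) * (if h : j < 2*p-2 then x ⟨j,h⟩ else 0) *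
      (if h : k < 2*p-2 then x ⟨k,h⟩ else 0)) (2*p-2)]
  apply Finset.sum_congr rfl
  intro j _
  rw [← Fin.sum_univ_eq_sum_range (fun k => (QIent p ((j:ℕ)+1) (k+1) : ℝ) *
      (if h : (j:ℕ) < 2*p-2 then x ⟨(j:ℕ),h⟩ else 0) *
      (if h : k < 2*p-2 then x ⟨k,h⟩ else 0)) (2*p-2)]
  simp only [Matrix.mulVec, dotProduct, Matrix.map_apply, QI, Finset.mul_sum]
  apply Finset.sum_congr rfl
  intro k _
  rw [dif_pos j.isLt, dif_pos k.isLt]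
  simp [Fin.eta]
  ring

theorem QI_eigenvalue_counts (p : ℕ) (hp : 3 ≤ p)
    (hM : ((QI p).map (Int.cast : ℤ → ℝ)).IsHermitian) :
    (Finset.univ.filter (fun i => 0 < hM.eigenvalues i)).card = p - 1 ∧
    (Finset.univ.filter (fun i => hM.eigenvalues i < 0)).card = p - 1 := by
  obtain ⟨s, rfl⟩ : ∃ s, p = 3 + s := ⟨p - 3, by omega⟩
  set p := 3 + s with hpdef
  have hp1 : p - 1 = s + 2 := by omega
  have hN : 2*p - 2 = 2*s + 4 := by omega
  have hps : p = s + 3 := by omega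
  -- vector families
  set v : Fin (s+2) → Fin (2*p-2) → ℝ :=
    fun i j => Xv s (fun k => if k = (i:ℕ) then (1:ℝ) else 0) j.val with hvdef
  set w : Fin (s+2) → Fin (2*p-2) → ℝ :=
    fun i j => Xw s (fun k => if k = (i:ℕ) then (1:ℝ) else 0) j.val with hwdef
  have key : ∀ (X : ℕ → (ℕ → ℝ) → ℕ → ℝ)
      (hXz : ∀ (c : ℕ → ℝ) (j : ℕ), 2*s+3 < j → X s c j = 0)
      (hXsum : ∀ (c : Fin (s+2) → ℝ) (j : ℕ),
        ∑ i : Fin (s+2), c i • X s (fun k => if k = (i:ℕ) then (1:ℝ) else 0) j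
        = X s (fun k => if h : k < s+2 then c ⟨k,h⟩ else 0) j)
      (c : Fin (s+2) → ℝ),
      ((∑ i, c i • (fun j : Fin (2*p-2) => X s (fun k => if k = (i:ℕ) then (1:ℝ) else 0) j.val))
        ⬝ᵥ ((QI p).map (Int.cast : ℤ → ℝ)) *ᵥ
       (∑ i, c i • (fun j : Fin (2*p-2) => X s (fun k => if k = (i:ℕ) then (1:ℝ) else 0) j.val)))
      = ∑ j ∈ Finset.range (2*s+4), ∑ k ∈ Finset.range (2*s+4),
          (QIent (s+3) (j+1) (k+1) : ℝ) *
          X s (fun k => if h : k < s+2 then c ⟨k,h⟩ else 0) j *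
          X s (fun k => if h : k < s+2 then c ⟨k,h⟩ else 0) k := by
    intro X hXz hXsum c
    have hx : (∑ i, c i • (fun j : Fin (2*p-2) =>
        X s (fun k => if k = (i:ℕ) then (1:ℝ) else 0) j.val))
        = fun j : Fin (2*p-2) => X s (fun k => if h : k < s+2 then c ⟨k,h⟩ else 0) j.val := by
      funext j
      rw [Finset.sum_apply]
      simp only [Pi.smul_apply]
      exact hXsum c j.val
    rw [hx, quad_to_range]
    rw [hN, hps]
    apply Finset.sum_congr rfl
    intro j hj
    apply Finset.sum_congr rfl
    intro k hk
    rw [Finset.mem_range] at hj hk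
    rw [dif_pos (show j < 2*s+4 from hj), dif_pos (show k < 2*s+4 from hk)]
  have hcne : ∀ c : Fin (s+2) → ℝ, c ≠ 0 →
      ∃ i, i ≤ s+1 ∧ (fun k => if h : k < s+2 then c ⟨k,h⟩ else 0) i ≠ 0 := by
    intro c hc
    obtain ⟨i, hi⟩ := Function.ne_iff.mp hc
    refine ⟨i.val, by omega, ?_⟩
    simp only [dif_pos i.isLt, Fin.eta]
    simpa using hi
  have hv : ∀ c : Fin (s+2) → ℝ, c ≠ 0 →
      0 < (∑ i, c i • v i) ⬝ᵥ ((QI p).map (Int.cast : ℤ → ℝ)) *ᵥ (∑ i, c i • v i) := by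
    intro c hc
    rw [hvdef]
    rw [key Xv (fun c j h => Xv_zero h c) (Xv_sum s) c]
    exact posQuad_pos s _ (hcne c hc)
  have hw : ∀ c : Fin (s+2) → ℝ, c ≠ 0 →
      (∑ i, c i • w i) ⬝ᵥ ((QI p).map (Int.cast : ℤ → ℝ)) *ᵥ (∑ i, c i • w i) < 0 := by
    intro c hc
    rw [hwdef]
    rw [key Xw (fun c j h => Xw_zero (by omega) c) (Xw_sum s) c]
    exact negQuad_neg s _ (hcne c hc)
  have main := inertia_count hM v w hv hw (by omega)
  rw [hp1]
  exact main
end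

section
/- For all integers p, q with p ≥ 3 and q ≥ p + 2, the determinant of the intersection matrix Q_{I-I}(p, q) equals (−1)^{q−1}. -/
open Matrix

/-- The (1-indexed) entry of the intersection matrix `Q_{I-I}(p, q)`:
the principal submatrix on indices 1,…,p−2 is J_{p−2}; on indices p−1,…,q−3 it is
J_{q−p−1}; on indices q−2,…,2q−4 it is −J_{q−1}; writing α = 2q−3 and β = 2q−2,
the entry (α, α) is 2, the entry (β, β) is 0, the entries (α, p−2), (p−2, α),
(α, p−1), (p−1, α), (β, q−3), (q−3, β) are 1, the entries (β, q−2) and (q−2, β)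
are −1, and all other entries (including (α, β) and (β, α)) are 0. -/
def QIIent (p q i j : ℕ) : ℤ :=
  if i ≤ p - 2 ∧ j ≤ p - 2 then triEnt i j
  else if p - 1 ≤ i ∧ i ≤ q - 3 ∧ p - 1 ≤ j ∧ j ≤ q - 3 then triEnt i j
  else if q - 2 ≤ i ∧ i ≤ 2*q - 4 ∧ q - 2 ≤ j ∧ j ≤ 2*q - 4 then -(triEnt i j)
  else if i = 2*q - 3 ∧ j = 2*q - 3 then 2
  else if (i = 2*q - 3 ∧ (j = p - 2 ∨ j = p - 1)) ∨ (j = 2*q - 3 ∧ (i = p - 2 ∨ i = p - 1)) then 1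
  else if (i = 2*q - 2 ∧ j = q - 3) ∨ (j = 2*q - 2 ∧ i = q - 3) then 1
  else if (i = 2*q - 2 ∧ j = q - 2) ∨ (j = 2*q - 2 ∧ i = q - 2) then -1
  else 0

/-- The intersection matrix `Q_{I-I}(p, q)`, of size (2q−2)×(2q−2). -/
def QI_I (p q : ℕ) : Matrix (Fin (2*q - 2)) (Fin (2*q - 2)) ℤ :=
  fun i j => QIIent p q (i.val + 1) (j.val + 1)


def Trid (d e : ℕ → ℤ) (n : ℕ) : Matrix (Fin n) (Fin n) ℤ :=
  fun i j => if (i : ℕ) = j then d i else if (i:ℕ) + 1 = j then e i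
    else if (j:ℕ) + 1 = i then e j else 0

lemma trid_rec (d e : ℕ → ℤ) (n : ℕ) :
    (Trid d e (n+2)).det
      = d 0 * (Trid (fun k => d (k+1)) (fun k => e (k+1)) (n+1)).det
        - e 0 * (e 0 * (Trid (fun k => d (k+2)) (fun k => e (k+2)) n).det) := by
  rw [Matrix.det_succ_row_zero]
  rw [Fin.sum_univ_succ, Fin.sum_univ_succ]
  have hsum : (∑ j : Fin n, (-1 : ℤ) ^ ((j.succ.succ : Fin (n+2)) : ℕ) *
      Trid d e (n+2) 0 j.succ.succ *
      ((Trid d e (n+2)).submatrix Fin.succ (Fin.succAbove j.succ.succ)).det) = 0 := by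
    apply Finset.sum_eq_zero
    intro j _
    have : Trid d e (n+2) 0 j.succ.succ = 0 := by simp [Trid, Fin.ext_iff]
    rw [this]; ring
  rw [hsum]
  have h0 : (Trid d e (n+2)).submatrix Fin.succ (Fin.succAbove 0)
      = Trid (fun k => d (k+1)) (fun k => e (k+1)) (n+1) := by
    ext i j
    simp [Trid, Fin.succAbove, Fin.ext_iff]
  rw [h0]
  -- the j = 1 minor
  set B := (Trid d e (n+2)).submatrix Fin.succ (Fin.succAbove (Fin.succ 0)) with hB
  have hBdet : B.det = e 0 * (Trid (fun k => d (k+2)) (fun k => e (k+2)) n).det := by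
    rw [Matrix.det_succ_column_zero, Fin.sum_univ_succ]
    have hz : (∑ i : Fin n, (-1 : ℤ) ^ ((i.succ : Fin (n+1)) : ℕ) * B i.succ 0 *
        (B.submatrix (Fin.succAbove i.succ) Fin.succ).det) = 0 := by
      apply Finset.sum_eq_zero
      intro i _
      have : B i.succ 0 = 0 := by
        simp [hB, Trid, Fin.succAbove, Fin.ext_iff]
      rw [this]; ring
    rw [hz]
    have hB00 : B 0 0 = e 0 := by
      simp [hB, Trid, Fin.succAbove, Fin.ext_iff]
    have hmin : B.submatrix (Fin.succAbove 0) Fin.succ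
        = Trid (fun k => d (k+2)) (fun k => e (k+2)) n := by
      ext i j
      simp only [hB, Matrix.submatrix_apply, Trid]
      have h1 : ((Fin.succ ((0:Fin (n+1)).succAbove i) : Fin (n+2)) : ℕ) = (i:ℕ) + 2 := by
        simp [Fin.succAbove, Fin.ext_iff]
      have h2 : (((Fin.succ 0 : Fin (n+2)).succAbove (Fin.succ j)) : ℕ) = (j:ℕ) + 2 := by
        simp [Fin.succAbove, Fin.ext_iff, Fin.lt_def]
      rw [h1, h2]
      simp [Fin.ext_iff]
    rw [hB00, hmin]
    simp
  rw [hBdet]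
  have hd : Trid d e (n+2) 0 0 = d 0 := by simp [Trid]
  have he : Trid d e (n+2) 0 (Fin.succ 0) = e 0 := by
    simp [Trid, Fin.ext_iff]
  rw [hd, he]
  simp
  ring

def dd (q k : ℕ) : ℤ := if k + 3 ≤ q then 2 else if k + 2 = q then 0 else -2
def ee (p q k : ℕ) : ℤ :=
  if k + 4 ≤ p then -1 else if k + 2 ≤ p then 1 else if k + 4 ≤ q then -1
  else if k + 3 = q then 1 else if k + 2 = q then -1 else 1
def pf (p q k : ℕ) : ℕ :=
  if k + 3 ≤ p then k else if k + 2 = p then 2*q - 4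
  else if k + 3 ≤ q then k - 1 else if k + 2 = q then 2*q - 3 else k - 2

lemma qA (p q i j : ℕ) (h : i ≤ p - 2 ∧ j ≤ p - 2) : QIIent p q i j = triEnt i j := by
  unfold QIIent; rw [if_pos h]
lemma qB (p q i j : ℕ) (h1 : ¬(i ≤ p - 2 ∧ j ≤ p - 2))
    (h2 : p - 1 ≤ i ∧ i ≤ q - 3 ∧ p - 1 ≤ j ∧ j ≤ q - 3) : QIIent p q i j = triEnt i j := by
  unfold QIIent; rw [if_neg h1, if_pos h2]
lemma qC (p q i j : ℕ) (h1 : ¬(i ≤ p - 2 ∧ j ≤ p - 2))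
    (h2 : ¬(p - 1 ≤ i ∧ i ≤ q - 3 ∧ p - 1 ≤ j ∧ j ≤ q - 3))
    (h3 : q - 2 ≤ i ∧ i ≤ 2*q - 4 ∧ q - 2 ≤ j ∧ j ≤ 2*q - 4) :
    QIIent p q i j = -(triEnt i j) := by
  unfold QIIent; rw [if_neg h1, if_neg h2, if_pos h3]
lemma qD (p q i j : ℕ) (h1 : ¬(i ≤ p - 2 ∧ j ≤ p - 2))
    (h2 : ¬(p - 1 ≤ i ∧ i ≤ q - 3 ∧ p - 1 ≤ j ∧ j ≤ q - 3))
    (h3 : ¬(q - 2 ≤ i ∧ i ≤ 2*q - 4 ∧ q - 2 ≤ j ∧ j ≤ 2*q - 4))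
    (h4 : i = 2*q - 3 ∧ j = 2*q - 3) : QIIent p q i j = 2 := by
  unfold QIIent; rw [if_neg h1, if_neg h2, if_neg h3, if_pos h4]
lemma qE (p q i j : ℕ) (h1 : ¬(i ≤ p - 2 ∧ j ≤ p - 2))
    (h2 : ¬(p - 1 ≤ i ∧ i ≤ q - 3 ∧ p - 1 ≤ j ∧ j ≤ q - 3))
    (h3 : ¬(q - 2 ≤ i ∧ i ≤ 2*q - 4 ∧ q - 2 ≤ j ∧ j ≤ 2*q - 4))
    (h4 : ¬(i = 2*q - 3 ∧ j = 2*q - 3))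
    (h5 : (i = 2*q - 3 ∧ (j = p - 2 ∨ j = p - 1)) ∨ (j = 2*q - 3 ∧ (i = p - 2 ∨ i = p - 1))) :
    QIIent p q i j = 1 := by
  unfold QIIent; rw [if_neg h1, if_neg h2, if_neg h3, if_neg h4, if_pos h5]
lemma qF (p q i j : ℕ) (h1 : ¬(i ≤ p - 2 ∧ j ≤ p - 2))
    (h2 : ¬(p - 1 ≤ i ∧ i ≤ q - 3 ∧ p - 1 ≤ j ∧ j ≤ q - 3))
    (h3 : ¬(q - 2 ≤ i ∧ i ≤ 2*q - 4 ∧ q - 2 ≤ j ∧ j ≤ 2*q - 4))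
    (h4 : ¬(i = 2*q - 3 ∧ j = 2*q - 3))
    (h5 : ¬((i = 2*q - 3 ∧ (j = p - 2 ∨ j = p - 1)) ∨ (j = 2*q - 3 ∧ (i = p - 2 ∨ i = p - 1))))
    (h6 : (i = 2*q - 2 ∧ j = q - 3) ∨ (j = 2*q - 2 ∧ i = q - 3)) : QIIent p q i j = 1 := by
  unfold QIIent; rw [if_neg h1, if_neg h2, if_neg h3, if_neg h4, if_neg h5, if_pos h6]
lemma qG (p q i j : ℕ) (h1 : ¬(i ≤ p - 2 ∧ j ≤ p - 2))
    (h2 : ¬(p - 1 ≤ i ∧ i ≤ q - 3 ∧ p - 1 ≤ j ∧ j ≤ q - 3))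
    (h3 : ¬(q - 2 ≤ i ∧ i ≤ 2*q - 4 ∧ q - 2 ≤ j ∧ j ≤ 2*q - 4))
    (h4 : ¬(i = 2*q - 3 ∧ j = 2*q - 3))
    (h5 : ¬((i = 2*q - 3 ∧ (j = p - 2 ∨ j = p - 1)) ∨ (j = 2*q - 3 ∧ (i = p - 2 ∨ i = p - 1))))
    (h6 : ¬((i = 2*q - 2 ∧ j = q - 3) ∨ (j = 2*q - 2 ∧ i = q - 3)))
    (h7 : (i = 2*q - 2 ∧ j = q - 2) ∨ (j = 2*q - 2 ∧ i = q - 2)) : QIIent p q i j = -1 := by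
  unfold QIIent; rw [if_neg h1, if_neg h2, if_neg h3, if_neg h4, if_neg h5, if_neg h6, if_pos h7]
lemma qH (p q i j : ℕ) (h1 : ¬(i ≤ p - 2 ∧ j ≤ p - 2))
    (h2 : ¬(p - 1 ≤ i ∧ i ≤ q - 3 ∧ p - 1 ≤ j ∧ j ≤ q - 3))
    (h3 : ¬(q - 2 ≤ i ∧ i ≤ 2*q - 4 ∧ q - 2 ≤ j ∧ j ≤ 2*q - 4))
    (h4 : ¬(i = 2*q - 3 ∧ j = 2*q - 3))
    (h5 : ¬((i = 2*q - 3 ∧ (j = p - 2 ∨ j = p - 1)) ∨ (j = 2*q - 3 ∧ (i = p - 2 ∨ i = p - 1))))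
    (h6 : ¬((i = 2*q - 2 ∧ j = q - 3) ∨ (j = 2*q - 2 ∧ i = q - 3)))
    (h7 : ¬((i = 2*q - 2 ∧ j = q - 2) ∨ (j = 2*q - 2 ∧ i = q - 2))) : QIIent p q i j = 0 := by
  unfold QIIent; rw [if_neg h1, if_neg h2, if_neg h3, if_neg h4, if_neg h5, if_neg h6, if_neg h7]


set_option maxHeartbeats 2000000 in
lemma entry_eq (p q : ℕ) (hp : 3 ≤ p) (hq : p + 2 ≤ q) (k l : ℕ)
    (hk : k < 2*q-2) (hl : l < 2*q-2) :
    QIIent p q (pf p q k + 1) (pf p q l + 1) =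
      (if k = l then dd q k else if k + 1 = l then ee p q k
       else if l + 1 = k then ee p q l else 0) := by
  have hreg : ∀ m, m < 2*q-2 →
      (m+3 ≤ p ∧ pf p q m = m) ∨ (m+2 = p ∧ pf p q m = 2*q-4) ∨
      (p ≤ m+1 ∧ m+3 ≤ q ∧ pf p q m = m-1) ∨ (m+2 = q ∧ pf p q m = 2*q-3) ∨
      (q ≤ m+1 ∧ pf p q m = m-2) := by
    intro m hm; unfold pf; split_ifs <;> omega
  rcases (show k = l ∨ k + 1 = l ∨ l + 1 = k ∨ (¬ k = l ∧ ¬ k+1 = l ∧ ¬ l+1 = k) by omega)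
      with hr | hr | hr | ⟨hr1, hr2, hr3⟩ <;>
    [rw [if_pos hr]; rw [if_neg (by omega), if_pos hr];
     rw [if_neg (by omega), if_neg (by omega), if_pos hr];
     rw [if_neg hr1, if_neg hr2, if_neg hr3]] <;>
  rcases hreg k hk with ⟨hk1,hk2⟩|⟨hk1,hk2⟩|⟨hk1,hk1',hk2⟩|⟨hk1,hk2⟩|⟨hk1,hk2⟩ <;>
    rcases hreg l hl with ⟨hl1,hl2⟩|⟨hl1,hl2⟩|⟨hl1,hl1',hl2⟩|⟨hl1,hl2⟩|⟨hl1,hl2⟩ <;>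
    rw [hk2, hl2] <;>
    first
    | (refine (qA p q _ _ (by omega)).trans ?_;
       first
       | omega
       | (simp only [triEnt, dd, ee]; all_goals omega)
       | (simp only [triEnt, dd, ee]; all_goals (split_ifs <;> omega))
       | (split_ifs <;> omega))
    | (refine (qB p q _ _ (by omega) (by omega)).trans ?_;
       first
       | omega
       | (simp only [triEnt, dd, ee]; all_goals omega)
       | (simp only [triEnt, dd, ee]; all_goals (split_ifs <;> omega))
       | (split_ifs <;> omega))
    | (refine (qC p q _ _ (by omega) (by omega) (by omega)).trans ?_;
       first
       | omega
       | (simp only [triEnt, dd, ee]; all_goals omega)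
       | (simp only [triEnt, dd, ee]; all_goals (split_ifs <;> omega))
       | (split_ifs <;> omega))
    | (refine (qD p q _ _ (by omega) (by omega) (by omega) (by omega)).trans ?_;
       first
       | omega
       | (simp only [triEnt, dd, ee]; all_goals omega)
       | (simp only [triEnt, dd, ee]; all_goals (split_ifs <;> omega))
       | (split_ifs <;> omega))
    | (refine (qE p q _ _ (by omega) (by omega) (by omega) (by omega) (by omega)).trans ?_;
       first
       | omega
       | (simp only [triEnt, dd, ee]; all_goals omega)
       | (simp only [triEnt, dd, ee]; all_goals (split_ifs <;> omega))
       | (split_ifs <;> omega))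
    | (refine (qF p q _ _ (by omega) (by omega) (by omega) (by omega) (by omega)
        (by omega)).trans ?_;
       first
       | omega
       | (simp only [triEnt, dd, ee]; all_goals omega)
       | (simp only [triEnt, dd, ee]; all_goals (split_ifs <;> omega))
       | (split_ifs <;> omega))
    | (refine (qG p q _ _ (by omega) (by omega) (by omega) (by omega) (by omega)
        (by omega) (by omega)).trans ?_;
       first
       | omega
       | (simp only [triEnt, dd, ee]; all_goals omega)
       | (simp only [triEnt, dd, ee]; all_goals (split_ifs <;> omega))
       | (split_ifs <;> omega))
    | (refine (qH p q _ _ (by omega) (by omega) (by omega) (by omega) (by omega)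
        (by omega) (by omega)).trans ?_;
       first
       | omega
       | (simp only [triEnt, dd, ee]; all_goals omega)
       | (simp only [triEnt, dd, ee]; all_goals (split_ifs <;> omega))
       | (split_ifs <;> omega))

def G (q s : ℕ) : ℤ :=
  if s + 3 ≤ q then (-1)^(q+1) * ((s:ℤ)+1)
  else if s + 2 = q then (-1)^(q+1) * ((q:ℤ) - 1)
  else (-1)^s * (2*(q:ℤ) - 1 - (s:ℤ))

lemma ee_sq (p q k : ℕ) : ee p q k * ee p q k = 1 := by
  unfold ee; split_ifs <;> norm_num

lemma cont (p q : ℕ) (hp : 3 ≤ p) (hq : p + 2 ≤ q) :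
    ∀ k s, s + k = 2*q - 2 →
      (Trid (fun j => dd q (s+j)) (fun j => ee p q (s+j)) k).det = G q s := by
  intro k
  induction k using Nat.strong_induction_on with
  | _ k ih =>
    intro s hs
    match k, ih, hs with
    | 0, ih, hs =>
      have hdet : (Trid (fun j => dd q (s+j)) (fun j => ee p q (s+j)) 0).det = 1 :=
        Matrix.det_fin_zero
      rw [hdet]
      have hs' : s = 2*q - 2 := by omega
      subst hs'
      unfold G
      rw [if_neg (by omega), if_neg (by omega)]
      have hev : Even (2*q-2) := ⟨q-1, by omega⟩
      rw [hev.neg_one_pow]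
      have : ((2*q-2 : ℕ) : ℤ) = 2*(q:ℤ) - 2 := by omega
      rw [this]; ring
    | 1, ih, hs =>
      have hdet : (Trid (fun j => dd q (s+j)) (fun j => ee p q (s+j)) 1).det
          = dd q (s+0) := by
        rw [Matrix.det_fin_one]; rfl
      rw [hdet]
      have hs' : s = 2*q - 3 := by omega
      subst hs'
      unfold dd G
      rw [if_neg (by omega), if_neg (by omega), if_neg (by omega), if_neg (by omega)]
      have hodd : Odd (2*q-3) := ⟨q-2, by omega⟩
      rw [hodd.neg_one_pow]
      have : ((2*q-3 : ℕ) : ℤ) = 2*(q:ℤ) - 3 := by omega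
      rw [this]; ring
    | (m+2), ih, hs =>
      rw [trid_rec]
      have hf1 : (fun k => (fun j => dd q (s+j)) (k+1)) = (fun j => dd q ((s+1)+j)) := by
        funext j; simp only []; congr 1; omega
      have hf2 : (fun k => (fun j => ee p q (s+j)) (k+1)) = (fun j => ee p q ((s+1)+j)) := by
        funext j; simp only []; congr 1; omega
      have hf3 : (fun k => (fun j => dd q (s+j)) (k+2)) = (fun j => dd q ((s+2)+j)) := by
        funext j; simp only []; congr 1; omega
      have hf4 : (fun k => (fun j => ee p q (s+j)) (k+2)) = (fun j => ee p q ((s+2)+j)) := by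
        funext j; simp only []; congr 1; omega
      rw [hf1, hf2, hf3, hf4]
      rw [ih (m+1) (by omega) (s+1) (by omega), ih m (by omega) (s+2) (by omega)]
      simp only [Nat.add_zero]
      rw [← mul_assoc, ee_sq, one_mul]
      -- now a scalar identity: G q s = dd q s * G q (s+1) - G q (s+2)
      rcases (show s + 3 ≤ q ∨ s + 2 = q ∨ q ≤ s + 1 by omega)
        with h | h | h
      · have hd : dd q s = 2 := by unfold dd; rw [if_pos h]
        have hG1 : G q (s+1) = (-1)^(q+1) * ((s:ℤ)+2) := by
          unfold G; split_ifs with h1 h2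
          · push_cast; ring
          · have hc : (q:ℤ) = (s:ℤ)+3 := by omega
            rw [hc]; push_cast; ring
          · omega
        have hG2 : G q (s+2) = (-1)^(q+1) * ((s:ℤ)+3) := by
          unfold G; split_ifs with h1 h2
          · push_cast; ring
          · have hc : (q:ℤ) = (s:ℤ)+4 := by omega
            rw [hc]; push_cast; ring
          · have hq3 : q = s + 3 := by omega
            subst hq3
            push_cast
            simp [pow_add, pow_succ]
            ring
        rw [hd, hG1, hG2]
        unfold G; rw [if_pos h]
        push_cast; ring
      · have hd : dd q s = 0 := by unfold dd; rw [if_neg (by omega), if_pos h]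
        have hG2 : G q (s+2) = (-1)^(s+2) * ((s:ℤ)+1) := by
          unfold G; rw [if_neg (by omega), if_neg (by omega)]
          have hc : (q:ℤ) = (s:ℤ)+2 := by omega
          rw [hc]; push_cast; ring
        rw [hd, hG2]
        unfold G; rw [if_neg (by omega), if_pos h]
        have hq2 : q = s + 2 := by omega
        subst hq2
        push_cast
        simp [pow_add, pow_succ]
        ring
      · have hd : dd q s = -2 := by unfold dd; rw [if_neg (by omega), if_neg (by omega)]
        have hG1 : G q (s+1) = (-1)^(s+1) * (2*(q:ℤ) - 2 - (s:ℤ)) := by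
          unfold G; rw [if_neg (by omega), if_neg (by omega)]
          push_cast; ring
        have hG2 : G q (s+2) = (-1)^(s+2) * (2*(q:ℤ) - 3 - (s:ℤ)) := by
          unfold G; rw [if_neg (by omega), if_neg (by omega)]
          push_cast; ring
        rw [hd, hG1, hG2]
        unfold G; rw [if_neg (by omega), if_neg (by omega)]
        simp [pow_add, pow_succ]
        ring

lemma pf_lt (p q : ℕ) (hp : 3 ≤ p) (hq : p + 2 ≤ q) (k : ℕ) (hk : k < 2*q-2) :
    pf p q k < 2*q-2 := by
  unfold pf; split_ifs <;> omega

lemma pf_inj (p q : ℕ) (hp : 3 ≤ p) (hq : p + 2 ≤ q) (k l : ℕ)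
    (hk : k < 2*q-2) (hl : l < 2*q-2) (h : pf p q k = pf p q l) : k = l := by
  unfold pf at h; split_ifs at h <;> omega

theorem det_QI_I (p q : ℕ) (hp : 3 ≤ p) (hq : p + 2 ≤ q) :
    (QI_I p q).det = (-1) ^ (q - 1) := by
  have hinj : Function.Injective
      (fun k : Fin (2*q-2) => (⟨pf p q k.val, pf_lt p q hp hq k.val k.isLt⟩ : Fin (2*q-2))) := by
    intro a b hab
    exact Fin.ext (pf_inj p q hp hq a.val b.val a.isLt b.isLt (congrArg Fin.val hab))
  let σ : Fin (2*q-2) ≃ Fin (2*q-2) :=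
    Equiv.ofBijective _ (Finite.injective_iff_bijective.mp hinj)
  have hsub : (QI_I p q).submatrix σ σ
      = Trid (fun j => dd q (0+j)) (fun j => ee p q (0+j)) (2*q-2) := by
    ext k l
    show QIIent p q (pf p q k.val + 1) (pf p q l.val + 1) = _
    rw [entry_eq p q hp hq k.val l.val k.isLt l.isLt]
    simp only [Trid, Nat.zero_add]
  have h1 : (QI_I p q).det
      = (Trid (fun j => dd q (0+j)) (fun j => ee p q (0+j)) (2*q-2)).det := by
    rw [← hsub, Matrix.det_submatrix_equiv_self]
  rw [h1, cont p q hp hq (2*q-2) 0 (by omega)]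
  unfold G
  rw [if_pos (by omega)]
  have hq1 : q + 1 = (q - 1) + 2 := by omega
  rw [hq1, pow_add]
  push_cast; ring
end

section
/- For every integer n with n > 431 and n ≠ 461, there exist positive integers u, v, w and integers p, q, r with 2 ≤ p < q < r such that n = u²p(p−1) + v²q(q−1) + w²r(r−1) + 2uvq(p−1) + 2uwr(p−1) + 2vwr(q−1) + u + v + w. -/
/-- `d(p, q, r, u, v, w) = d₃ + 1/2` for the overtwisted contact structure on S³ supported by
the real algebraic open book of the graph multilink of splice type (I-I-I). -/
def dIII (p q r u v w : ℤ) : ℤ :=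
  u^2 * p * (p - 1) + v^2 * q * (q - 1) + w^2 * r * (r - 1)
    + 2*u*v * q * (p - 1) + 2*u*w * r * (p - 1) + 2*v*w * r * (q - 1) + u + v + w

private lemma dIII_tile (x : ℤ) (hx : 0 ≤ x) :
    ∃ M K : ℤ, 0 ≤ M ∧ K = M * M ∧ K - M ≤ x ∧ x < K + M := by
  have hx' : ((x.toNat : ℤ)) = x := Int.toNat_of_nonneg hx
  set a : ℤ := (Nat.sqrt x.toNat : ℤ) with ha
  have ha0 : 0 ≤ a := by positivity
  have h1 : a * a ≤ x := by
    have h := Nat.sqrt_le x.toNat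
    calc a * a = ((Nat.sqrt x.toNat * Nat.sqrt x.toNat : ℕ) : ℤ) := by push_cast; ring
      _ ≤ ((x.toNat : ℕ) : ℤ) := by exact_mod_cast h
      _ = x := hx'
  have h2 : x < (a + 1) * (a + 1) := by
    have h := Nat.lt_succ_sqrt x.toNat
    calc x = ((x.toNat : ℕ) : ℤ) := hx'.symm
      _ < ((Nat.succ (Nat.sqrt x.toNat) * Nat.succ (Nat.sqrt x.toNat) : ℕ) : ℤ) := by
          exact_mod_cast h
      _ = (a + 1) * (a + 1) := by push_cast; ring
  rcases le_or_gt (a * (a + 1)) x with h | h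
  · exact ⟨a + 1, (a + 1) * (a + 1), by linarith, rfl, by nlinarith, by nlinarith⟩
  · exact ⟨a, a * a, ha0, rfl, by nlinarith, by nlinarith⟩

private lemma dIII_build (n M K u p q r b : ℤ) (hK : K = M * M)
    (h2q : q + r = M + u + 1 - u * p) (hb : b = r - q)
    (hn : n = K + u * (u + 2) * (p - 1) + u + 1 - b) :
    n = dIII p q r u 1 1 := by
  have hM : M = u * p + q + r - u - 1 := by linarith
  rw [hn, hK, hM, hb]
  simp only [dIII]
  ring

private lemma dIII_odd_wit (n : ℤ) (hne : n ≠ 461)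
    (h : n = 457 ∨ n = 459 ∨ n = 461 ∨ n = 463 ∨ n = 465 ∨ n = 467 ∨ n = 469 ∨ n = 501 ∨ n = 503 ∨ n = 505 ∨ n = 507 ∨ n = 509 ∨ n = 511 ∨ n = 547 ∨ n = 549 ∨ n = 551 ∨ n = 553 ∨ n = 555 ∨ n = 595 ∨ n = 597 ∨ n = 599 ∨ n = 601 ∨ n = 645 ∨ n = 647 ∨ n = 649 ∨ n = 697 ∨ n = 699 ∨ n = 751 ∨ n = 1065 ∨ n = 1131 ∨ n = 1197 ∨ n = 1199 ∨ n = 1267 ∨ n = 1269 ∨ n = 1337 ∨ n = 1339 ∨ n = 1341 ∨ n = 1411 ∨ n = 1413) :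
    ∃ u v w p q r : ℤ, 0 < u ∧ 0 < v ∧ 0 < w ∧ 2 ≤ p ∧ p < q ∧ q < r ∧
      n = dIII p q r u v w := by
  rcases h with rfl|rfl|rfl|rfl|rfl|rfl|rfl|rfl|rfl|rfl|rfl|rfl|rfl|rfl|rfl|rfl|rfl|rfl|rfl|rfl|rfl|rfl|rfl|rfl|rfl|rfl|rfl|rfl|rfl|rfl|rfl|rfl|rfl|rfl|rfl|rfl|rfl|rfl|rfl
  · exact ⟨1, 3, 1, 2, 3, 14, by norm_num [dIII]⟩
  · exact ⟨3, 3, 3, 2, 3, 4, by norm_num [dIII]⟩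
  · exact absurd rfl hne
  · exact ⟨2, 1, 2, 2, 3, 9, by norm_num [dIII]⟩
  · exact ⟨2, 6, 1, 2, 3, 5, by norm_num [dIII]⟩
  · exact ⟨2, 5, 2, 2, 3, 4, by norm_num [dIII]⟩
  · exact ⟨8, 2, 1, 2, 3, 7, by norm_num [dIII]⟩
  · exact ⟨3, 1, 1, 2, 9, 11, by norm_num [dIII]⟩
  · exact ⟨3, 2, 4, 2, 3, 4, by norm_num [dIII]⟩
  · exact ⟨9, 1, 1, 2, 4, 8, by norm_num [dIII]⟩
  · exact ⟨8, 2, 1, 2, 3, 8, by norm_num [dIII]⟩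
  · exact ⟨2, 4, 3, 2, 3, 4, by norm_num [dIII]⟩
  · exact ⟨1, 2, 2, 2, 3, 9, by norm_num [dIII]⟩
  · exact ⟨2, 5, 2, 2, 3, 5, by norm_num [dIII]⟩
  · exact ⟨2, 2, 3, 2, 3, 6, by norm_num [dIII]⟩
  · exact ⟨3, 1, 5, 2, 3, 4, by norm_num [dIII]⟩
  · exact ⟨8, 1, 2, 2, 3, 6, by norm_num [dIII]⟩
  · exact ⟨2, 3, 4, 2, 3, 4, by norm_num [dIII]⟩
  · exact ⟨10, 2, 1, 2, 3, 7, by norm_num [dIII]⟩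
  · exact ⟨3, 7, 1, 2, 3, 4, by norm_num [dIII]⟩
  · exact ⟨10, 1, 2, 2, 3, 5, by norm_num [dIII]⟩
  · exact ⟨7, 2, 2, 2, 3, 6, by norm_num [dIII]⟩
  · exact ⟨5, 3, 1, 2, 3, 13, by norm_num [dIII]⟩
  · exact ⟨9, 2, 2, 2, 3, 5, by norm_num [dIII]⟩
  · exact ⟨13, 1, 1, 2, 4, 5, by norm_num [dIII]⟩
  · exact ⟨7, 3, 1, 2, 4, 8, by norm_num [dIII]⟩
  · exact ⟨2, 8, 1, 2, 3, 5, by norm_num [dIII]⟩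
  · exact ⟨2, 6, 3, 2, 3, 4, by norm_num [dIII]⟩
  · exact ⟨1, 3, 7, 2, 3, 4, by norm_num [dIII]⟩
  · exact ⟨11, 5, 1, 2, 3, 8, by norm_num [dIII]⟩
  · exact ⟨5, 6, 4, 2, 3, 4, by norm_num [dIII]⟩
  · exact ⟨12, 4, 1, 2, 4, 6, by norm_num [dIII]⟩
  · exact ⟨5, 1, 5, 2, 3, 6, by norm_num [dIII]⟩
  · exact ⟨6, 10, 1, 2, 3, 4, by norm_num [dIII]⟩
  · exact ⟨1, 13, 1, 2, 3, 4, by norm_num [dIII]⟩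
  · exact ⟨1, 5, 1, 2, 3, 25, by norm_num [dIII]⟩
  · exact ⟨13, 1, 5, 2, 3, 4, by norm_num [dIII]⟩
  · exact ⟨10, 3, 4, 2, 3, 5, by norm_num [dIII]⟩
  · exact ⟨5, 3, 7, 2, 3, 4, by norm_num [dIII]⟩

private lemma dIII_even_wit (n : ℤ) (hne : n ≠ 461)
    (h : n = 432 ∨ n = 434 ∨ n = 436 ∨ n = 470 ∨ n = 472 ∨ n = 474 ∨ n = 476 ∨ n = 478 ∨ n = 514 ∨ n = 516 ∨ n = 518 ∨ n = 520 ∨ n = 522 ∨ n = 558 ∨ n = 560 ∨ n = 562 ∨ n = 564 ∨ n = 566 ∨ n = 568 ∨ n = 606 ∨ n = 608 ∨ n = 610 ∨ n = 612 ∨ n = 614 ∨ n = 616 ∨ n = 654 ∨ n = 656 ∨ n = 658 ∨ n = 660 ∨ n = 662 ∨ n = 664 ∨ n = 706 ∨ n = 708 ∨ n = 710 ∨ n = 712 ∨ n = 714 ∨ n = 758 ∨ n = 760 ∨ n = 762 ∨ n = 764 ∨ n = 766 ∨ n = 814 ∨ n = 816 ∨ n = 818 ∨ n = 820 ∨ n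 = 874 ∨ n = 876 ∨ n = 934 ∨ n = 1576 ∨ n = 1656 ∨ n = 1738 ∨ n = 1822) :
    ∃ u v w p q r : ℤ, 0 < u ∧ 0 < v ∧ 0 < w ∧ 2 ≤ p ∧ p < q ∧ q < r ∧
      n = dIII p q r u v w := by
  rcases h with rfl|rfl|rfl|rfl|rfl|rfl|rfl|rfl|rfl|rfl|rfl|rfl|rfl|rfl|rfl|rfl|rfl|rfl|rfl|rfl|rfl|rfl|rfl|rfl|rfl|rfl|rfl|rfl|rfl|rfl|rfl|rfl|rfl|rfl|rfl|rfl|rfl|rfl|rfl|rfl|rfl|rfl|rfl|rfl|rfl|rfl|rfl|rfl|rfl|rfl|rfl|rfl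
  · exact ⟨3, 1, 2, 2, 3, 8, by norm_num [dIII]⟩
  · exact ⟨3, 2, 1, 2, 5, 9, by norm_num [dIII]⟩
  · exact ⟨4, 5, 1, 2, 3, 4, by norm_num [dIII]⟩
  · exact ⟨3, 3, 2, 2, 3, 6, by norm_num [dIII]⟩
  · exact ⟨4, 5, 1, 2, 3, 5, by norm_num [dIII]⟩
  · exact ⟨4, 4, 2, 2, 3, 4, by norm_num [dIII]⟩
  · exact ⟨3, 2, 3, 2, 3, 5, by norm_num [dIII]⟩
  · exact ⟨2, 2, 2, 2, 3, 8, by norm_num [dIII]⟩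
  · exact ⟨2, 5, 1, 2, 3, 9, by norm_num [dIII]⟩
  · exact ⟨4, 3, 3, 2, 3, 4, by norm_num [dIII]⟩
  · exact ⟨1, 4, 1, 2, 3, 13, by norm_num [dIII]⟩
  · exact ⟨2, 4, 2, 2, 3, 6, by norm_num [dIII]⟩
  · exact ⟨3, 6, 1, 2, 3, 5, by norm_num [dIII]⟩
  · exact ⟨1, 2, 1, 3, 7, 9, by norm_num [dIII]⟩
  · exact ⟨3, 2, 1, 2, 5, 12, by norm_num [dIII]⟩
  · exact ⟨4, 2, 4, 2, 3, 4, by norm_num [dIII]⟩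
  · exact ⟨8, 1, 1, 2, 3, 12, by norm_num [dIII]⟩
  · exact ⟨2, 2, 2, 2, 3, 9, by norm_num [dIII]⟩
  · exact ⟨3, 4, 3, 2, 3, 4, by norm_num [dIII]⟩
  · exact ⟨5, 6, 1, 2, 3, 4, by norm_num [dIII]⟩
  · exact ⟨3, 5, 2, 2, 3, 5, by norm_num [dIII]⟩
  · exact ⟨3, 4, 1, 2, 4, 8, by norm_num [dIII]⟩
  · exact ⟨4, 1, 5, 2, 3, 4, by norm_num [dIII]⟩
  · exact ⟨3, 3, 2, 2, 4, 6, by norm_num [dIII]⟩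
  · exact ⟨3, 3, 4, 2, 3, 4, by norm_num [dIII]⟩
  · exact ⟨8, 1, 1, 2, 3, 14, by norm_num [dIII]⟩
  · exact ⟨9, 2, 1, 2, 3, 10, by norm_num [dIII]⟩
  · exact ⟨1, 6, 1, 2, 3, 11, by norm_num [dIII]⟩
  · exact ⟨12, 1, 1, 2, 3, 8, by norm_num [dIII]⟩
  · exact ⟨4, 7, 1, 2, 3, 4, by norm_num [dIII]⟩
  · exact ⟨2, 3, 3, 2, 3, 6, by norm_num [dIII]⟩
  · exact ⟨3, 4, 3, 2, 3, 5, by norm_num [dIII]⟩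
  · exact ⟨4, 6, 2, 2, 3, 4, by norm_num [dIII]⟩
  · exact ⟨9, 1, 2, 2, 3, 7, by norm_num [dIII]⟩
  · exact ⟨6, 3, 1, 2, 3, 13, by norm_num [dIII]⟩
  · exact ⟨10, 3, 1, 2, 3, 7, by norm_num [dIII]⟩
  · exact ⟨4, 5, 3, 2, 3, 4, by norm_num [dIII]⟩
  · exact ⟨11, 1, 2, 2, 3, 6, by norm_num [dIII]⟩
  · exact ⟨2, 6, 2, 2, 3, 6, by norm_num [dIII]⟩
  · exact ⟨8, 2, 2, 2, 3, 7, by norm_num [dIII]⟩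
  · exact ⟨1, 5, 2, 2, 3, 8, by norm_num [dIII]⟩
  · exact ⟨10, 2, 2, 2, 3, 6, by norm_num [dIII]⟩
  · exact ⟨3, 3, 4, 2, 3, 5, by norm_num [dIII]⟩
  · exact ⟨13, 1, 2, 2, 3, 5, by norm_num [dIII]⟩
  · exact ⟨10, 1, 3, 2, 3, 5, by norm_num [dIII]⟩
  · exact ⟨1, 5, 2, 2, 3, 9, by norm_num [dIII]⟩
  · exact ⟨11, 4, 1, 2, 3, 6, by norm_num [dIII]⟩
  · exact ⟨8, 4, 2, 2, 3, 6, by norm_num [dIII]⟩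
  · exact ⟨13, 4, 3, 2, 3, 5, by norm_num [dIII]⟩
  · exact ⟨3, 1, 10, 2, 3, 4, by norm_num [dIII]⟩
  · exact ⟨1, 11, 4, 2, 3, 4, by norm_num [dIII]⟩
  · exact ⟨2, 10, 2, 2, 3, 9, by norm_num [dIII]⟩

set_option maxHeartbeats 2000000 in
private lemma dIII_odd_residual (n M K k : ℤ) (hn : 431 < n) (h0 : 0 ≤ M) (h38 : M < 38)
    (hK : K = M * M) (hKk : K = 2 * k + M) (hod : n % 2 = 1)
    (ht1 : K - M + 11 ≤ n) (ht2 : n ≤ K + M + 10) (hw0 : M - 6 ≤ n - K)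
    (hw1 : ¬(51 - M ≤ n - K ∧ n - K ≤ 40)) (hw2 : ¬(83 - M ≤ n - K ∧ n - K ≤ 70)) :
    n = 457 ∨ n = 459 ∨ n = 461 ∨ n = 463 ∨ n = 465 ∨ n = 467 ∨ n = 469 ∨ n = 501 ∨ n = 503 ∨ n = 505 ∨ n = 507 ∨ n = 509 ∨ n = 511 ∨ n = 547 ∨ n = 549 ∨ n = 551 ∨ n = 553 ∨ n = 555 ∨ n = 595 ∨ n = 597 ∨ n = 599 ∨ n = 601 ∨ n = 645 ∨ n = 647 ∨ n = 649 ∨ n = 697 ∨ n = 699 ∨ n = 751 ∨ n = 1065 ∨ n = 1131 ∨ n = 1197 ∨ n = 1199 ∨ n = 1267 ∨ n = 1269 ∨ n = 1337 ∨ n = 1339 ∨ n = 1341 ∨ n = 1411 ∨ n = 1413 := by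
  interval_cases M <;> omega

set_option maxHeartbeats 2000000 in
private lemma dIII_even_residual (n M K k : ℤ) (hn : 431 < n) (h0 : 0 ≤ M) (h43 : M ≤ 43)
    (hK : K = M * M) (hKk : K = 2 * k + M) (hev : n % 2 = 0)
    (ht1 : K - M + 18 ≤ n) (ht2 : n ≤ K + M + 17) (hw0 : 2 * M - 26 ≤ n - K)
    (hw1 : ¬(38 - M ≤ n - K ∧ n - K ≤ 28)) (hw2 : ¬(66 - M ≤ n - K ∧ n - K ≤ 54))
    (hw3 : ¬(102 - M ≤ n - K ∧ n - K ≤ 88)) :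
    n = 432 ∨ n = 434 ∨ n = 436 ∨ n = 470 ∨ n = 472 ∨ n = 474 ∨ n = 476 ∨ n = 478 ∨ n = 514 ∨ n = 516 ∨ n = 518 ∨ n = 520 ∨ n = 522 ∨ n = 558 ∨ n = 560 ∨ n = 562 ∨ n = 564 ∨ n = 566 ∨ n = 568 ∨ n = 606 ∨ n = 608 ∨ n = 610 ∨ n = 612 ∨ n = 614 ∨ n = 616 ∨ n = 654 ∨ n = 656 ∨ n = 658 ∨ n = 660 ∨ n = 662 ∨ n = 664 ∨ n = 706 ∨ n = 708 ∨ n = 710 ∨ n = 712 ∨ n = 714 ∨ n = 758 ∨ n = 760 ∨ n = 762 ∨ n = 764 ∨ n = 766 ∨ n = 814 ∨ n = 816 ∨ n = 818 ∨ n = 820 ∨ n = 874 ∨ n = 876 ∨ n = 934 ∨ n = 1576 ∨ n = 1656 ∨ n = 1738 ∨ n = 1822 := by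
  interval_cases M <;> omega

theorem dIII_surjective_above_431 (n : ℤ) (hn : 431 < n) (hn' : n ≠ 461) :
    ∃ u v w p q r : ℤ, 0 < u ∧ 0 < v ∧ 0 < w ∧ 2 ≤ p ∧ p < q ∧ q < r ∧
      n = dIII p q r u v w := by
  rcases Int.even_or_odd n with he | ho
  · -- even case
    have hev : n % 2 = 0 := Int.even_iff.mp he
    obtain ⟨M, K, hM0, hK, ht1, ht2⟩ := dIII_tile (n - 18) (by omega)
    obtain ⟨k, hk⟩ := Int.even_mul_succ_self (M - 1)
    have hKk : K = 2 * k + M := by linear_combination hK + hk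
    rcases le_or_gt (n - K) (2 * M - 27) with hc1 | hc1
    · rcases le_or_gt (n - K) 10 with hc2 | hc2
      · -- u = 2, p = 2
        obtain ⟨q, hq2⟩ : ∃ q : ℤ, 2 * q = M - 1 - (11 - (n - K)) :=
          ⟨(M - 1 - (11 - (n - K))) / 2, by omega⟩
        exact ⟨2, 1, 1, 2, q, q + (11 - (n - K)), by norm_num, by norm_num, by norm_num,
          le_refl 2, by omega, by omega,
          dIII_build n M K 2 2 q (q + (11 - (n - K))) (11 - (n - K)) hK (by omega) (by omega)
            (by omega)⟩
      · -- u = 2, p = (D+13)/8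
        obtain ⟨q, hq2⟩ : ∃ q : ℤ,
            2 * q = M + 3 - 2 * ((n - K + 13) / 8) - (8 * ((n - K + 13) / 8) - 5 - (n - K)) :=
          ⟨(M + 3 - 2 * ((n - K + 13) / 8) - (8 * ((n - K + 13) / 8) - 5 - (n - K))) / 2, by omega⟩
        refine ⟨2, 1, 1, (n - K + 13) / 8, q,
          q + (8 * ((n - K + 13) / 8) - 5 - (n - K)), by norm_num, by norm_num, by norm_num,
          by omega, by omega, by omega,
          dIII_build n M K 2 ((n - K + 13) / 8) q
            (q + (8 * ((n - K + 13) / 8) - 5 - (n - K)))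
            (8 * ((n - K + 13) / 8) - 5 - (n - K)) hK (by omega) (by omega) (by omega)⟩
    · rcases le_or_gt (n - K) 28 with hc2 | hc2
      · rcases le_or_gt (38 - M) (n - K) with hc3 | hc3
        · -- u = 4, p = 2
          obtain ⟨q, hq2⟩ : ∃ q : ℤ, 2 * q = M - 3 - (29 - (n - K)) :=
            ⟨(M - 3 - (29 - (n - K))) / 2, by omega⟩
          exact ⟨4, 1, 1, 2, q, q + (29 - (n - K)), by norm_num, by norm_num, by norm_num,
            le_refl 2, by omega, by omega,
            dIII_build n M K 4 2 q (q + (29 - (n - K))) (29 - (n - K)) hK (by omega) (by omega)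
              (by omega)⟩
        · exact dIII_even_wit n hn' (dIII_even_residual n M K k hn hM0 (by omega) hK hKk hev
            (by omega) (by omega) (by omega) (by omega) (by omega) (by omega))
      · rcases le_or_gt (n - K) 54 with hc3 | hc3
        · rcases le_or_gt (66 - M) (n - K) with hc4 | hc4
          · -- u = 6, p = 2
            obtain ⟨q, hq2⟩ : ∃ q : ℤ, 2 * q = M - 5 - (55 - (n - K)) :=
              ⟨(M - 5 - (55 - (n - K))) / 2, by omega⟩
            exact ⟨6, 1, 1, 2, q, q + (55 - (n - K)), by norm_num, by norm_num, by norm_num,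
              le_refl 2, by omega, by omega,
              dIII_build n M K 6 2 q (q + (55 - (n - K))) (55 - (n - K)) hK (by omega) (by omega)
                (by omega)⟩
          · exact dIII_even_wit n hn' (dIII_even_residual n M K k hn hM0 (by omega) hK hKk hev
              (by omega) (by omega) (by omega) (by omega) (by omega) (by omega))
        · rcases le_or_gt (n - K) 88 with hc4 | hc4
          · rcases le_or_gt (102 - M) (n - K) with hc5 | hc5
            · -- u = 8, p = 2
              obtain ⟨q, hq2⟩ : ∃ q : ℤ, 2 * q = M - 7 - (89 - (n - K)) :=
                ⟨(M - 7 - (89 - (n - K))) / 2, by omega⟩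
              exact ⟨8, 1, 1, 2, q, q + (89 - (n - K)), by norm_num, by norm_num, by norm_num,
                le_refl 2, by omega, by omega,
                dIII_build n M K 8 2 q (q + (89 - (n - K))) (89 - (n - K)) hK (by omega)
                  (by omega) (by omega)⟩
            · exact dIII_even_wit n hn' (dIII_even_residual n M K k hn hM0 (by omega) hK hKk hev
                (by omega) (by omega) (by omega) (by omega) (by omega) (by omega))
          · exact dIII_even_wit n hn' (dIII_even_residual n M K k hn hM0 (by omega) hK hKk hev
              (by omega) (by omega) (by omega) (by omega) (by omega) (by omega))
  · -- odd case
    have hod : n % 2 = 1 := Int.odd_iff.mp ho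
    obtain ⟨M, K, hM0, hK, ht1, ht2⟩ := dIII_tile (n - 11) (by omega)
    obtain ⟨k, hk⟩ := Int.even_mul_succ_self (M - 1)
    have hKk : K = 2 * k + M := by linear_combination hK + hk
    rcases le_or_gt (n - K) (M - 7) with hc1 | hc1
    · rcases le_or_gt (n - K) 4 with hc2 | hc2
      · -- u = 1, p = 2
        obtain ⟨q, hq2⟩ : ∃ q : ℤ, 2 * q = M - (5 - (n - K)) :=
          ⟨(M - (5 - (n - K))) / 2, by omega⟩
        exact ⟨1, 1, 1, 2, q, q + (5 - (n - K)), by norm_num, by norm_num, by norm_num,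
          le_refl 2, by omega, by omega,
          dIII_build n M K 1 2 q (q + (5 - (n - K))) (5 - (n - K)) hK (by omega) (by omega)
            (by omega)⟩
      · -- u = 1, p = (D+4)/3
        obtain ⟨q, hq2⟩ : ∃ q : ℤ,
            2 * q = M + 2 - (n - K + 4) / 3 - (3 * ((n - K + 4) / 3) - 1 - (n - K)) :=
          ⟨(M + 2 - (n - K + 4) / 3 - (3 * ((n - K + 4) / 3) - 1 - (n - K))) / 2, by omega⟩
        refine ⟨1, 1, 1, (n - K + 4) / 3, q,
          q + (3 * ((n - K + 4) / 3) - 1 - (n - K)), by norm_num, by norm_num, by norm_num,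
          by omega, by omega, by omega,
          dIII_build n M K 1 ((n - K + 4) / 3) q
            (q + (3 * ((n - K + 4) / 3) - 1 - (n - K)))
            (3 * ((n - K + 4) / 3) - 1 - (n - K)) hK (by omega) (by omega) (by omega)⟩
    · rcases le_or_gt 38 M with hc2 | hc2
      · -- u = 3, p = (D+26)/15
        obtain ⟨q, hq2⟩ : ∃ q : ℤ,
            2 * q = M + 4 - 3 * ((n - K + 26) / 15) - (15 * ((n - K + 26) / 15) - 11 - (n - K)) :=
          ⟨(M + 4 - 3 * ((n - K + 26) / 15) - (15 * ((n - K + 26) / 15) - 11 - (n - K))) / 2,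
            by omega⟩
        refine ⟨3, 1, 1, (n - K + 26) / 15, q,
          q + (15 * ((n - K + 26) / 15) - 11 - (n - K)), by norm_num, by norm_num, by norm_num,
          by omega, by omega, by omega,
          dIII_build n M K 3 ((n - K + 26) / 15) q
            (q + (15 * ((n - K + 26) / 15) - 11 - (n - K)))
            (15 * ((n - K + 26) / 15) - 11 - (n - K)) hK (by omega) (by omega) (by omega)⟩
      · rcases le_or_gt (n - K) 40 with hc3 | hc3
        · rcases le_or_gt (51 - M) (n - K) with hc4 | hc4
          · -- u = 5, p = 2
            obtain ⟨q, hq2⟩ : ∃ q : ℤ, 2 * q = M - 4 - (41 - (n - K)) :=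
              ⟨(M - 4 - (41 - (n - K))) / 2, by omega⟩
            exact ⟨5, 1, 1, 2, q, q + (41 - (n - K)), by norm_num, by norm_num, by norm_num,
              le_refl 2, by omega, by omega,
              dIII_build n M K 5 2 q (q + (41 - (n - K))) (41 - (n - K)) hK (by omega) (by omega)
                (by omega)⟩
          · exact dIII_odd_wit n hn' (dIII_odd_residual n M K k hn hM0 hc2 hK hKk hod
              (by omega) (by omega) (by omega) (by omega) (by omega))
        · rcases le_or_gt (n - K) 70 with hc4 | hc4
          · rcases le_or_gt (83 - M) (n - K) with hc5 | hc5
            · -- u = 7, p = 2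
              obtain ⟨q, hq2⟩ : ∃ q : ℤ, 2 * q = M - 6 - (71 - (n - K)) :=
                ⟨(M - 6 - (71 - (n - K))) / 2, by omega⟩
              exact ⟨7, 1, 1, 2, q, q + (71 - (n - K)), by norm_num, by norm_num, by norm_num,
                le_refl 2, by omega, by omega,
                dIII_build n M K 7 2 q (q + (71 - (n - K))) (71 - (n - K)) hK (by omega)
                  (by omega) (by omega)⟩
            · exact dIII_odd_wit n hn' (dIII_odd_residual n M K k hn hM0 hc2 hK hKk hod
                (by omega) (by omega) (by omega) (by omega) (by omega))
          · exact dIII_odd_wit n hn' (dIII_odd_residual n M K k hn hM0 hc2 hK hKk hod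
              (by omega) (by omega) (by omega) (by omega) (by omega))
end
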